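/- arXiv:1312.2206 — 7 statements merged into one kernel-verified Lean document; each statement's English description precedes it below -/
import Mathlib

section
/- Let u : [0,1] → ℝ be continuous with u(σ) > 0 on (0,1], and define λ(σ) = √(2 ∫₀^σ u(σ₁) dσ₁). Then λ(0) = 0, λ is differentiable on (0,1] with λ(σ)λ'(σ) = u(σ) and λ'(σ) ≥ 0, and the functionals transform as: -∫₀¹ u(σ) log u(σ) dσ = -∫₀¹ λ(σ)λ'(σ) log(λ(σ)λ'(σ)) dσ and -∫₀¹ (u(σ) log u(σ)) / √(∫₀^σ u(σ₁) dσ₁) dσ = -√2 ∫₀¹ λ'(σ) log(λ(σ)λ'(σ)) dσ. -/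
open MeasureTheory Real

/-- Let `u : [0,1] → ℝ` be continuous with `u > 0` on `(0,1]`, and let
`λ(σ) = √(2 ∫₀^σ u)`.  Then `λ(0) = 0`, `λ` is differentiable on `(0,1]`
(within `[0,1]`) with `λ λ' = u` and `λ' ≥ 0`, and the functionals transform as
`-∫₀¹ u log u = -∫₀¹ λλ' log(λλ')` and
`-∫₀¹ (u log u)/√(∫₀^σ u) = -√2 ∫₀¹ λ' log(λλ')`. -/
theorem functional_transformation (u : ℝ → ℝ)
    (hcont : ContinuousOn u (Set.Icc (0:ℝ) 1))
    (hpos : ∀ σ ∈ Set.Ioc (0:ℝ) 1, 0 < u σ)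
    (lam : ℝ → ℝ)
    (hlam : ∀ σ, lam σ = Real.sqrt (2 * ∫ t in (0:ℝ)..σ, u t)) :
    lam 0 = 0 ∧
    (∀ σ ∈ Set.Ioc (0:ℝ) 1,
      DifferentiableWithinAt ℝ lam (Set.Icc (0:ℝ) 1) σ ∧
      lam σ * derivWithin lam (Set.Icc (0:ℝ) 1) σ = u σ ∧
      0 ≤ derivWithin lam (Set.Icc (0:ℝ) 1) σ) ∧
    (-∫ σ in (0:ℝ)..1, u σ * Real.log (u σ)) =
      (-∫ σ in (0:ℝ)..1,
        lam σ * derivWithin lam (Set.Icc (0:ℝ) 1) σ *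
          Real.log (lam σ * derivWithin lam (Set.Icc (0:ℝ) 1) σ)) ∧
    (-∫ σ in (0:ℝ)..1,
        (u σ * Real.log (u σ)) / Real.sqrt (∫ t in (0:ℝ)..σ, u t)) =
      -Real.sqrt 2 * ∫ σ in (0:ℝ)..1,
        derivWithin lam (Set.Icc (0:ℝ) 1) σ *
          Real.log (lam σ * derivWithin lam (Set.Icc (0:ℝ) 1) σ) := by
  set F : ℝ → ℝ := fun σ => ∫ t in (0:ℝ)..σ, u t with hFdef
  have hint : ∀ σ ∈ Set.Icc (0:ℝ) 1, IntervalIntegrable u volume 0 σ := by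
    intro σ hσ
    apply ContinuousOn.intervalIntegrable
    apply hcont.mono
    rw [Set.uIcc_of_le hσ.1]
    exact Set.Icc_subset_Icc le_rfl hσ.2
  have hFpos : ∀ σ ∈ Set.Ioc (0:ℝ) 1, 0 < F σ := by
    intro σ hσ
    apply intervalIntegral.intervalIntegral_pos_of_pos_on (hint σ ⟨hσ.1.le, hσ.2⟩)
    · intro x hx
      exact hpos x ⟨hx.1, hx.2.le.trans hσ.2⟩
    · exact hσ.1
  have hlamderiv : ∀ σ ∈ Set.Ioc (0:ℝ) 1,
      HasDerivWithinAt lam (u σ / Real.sqrt (2 * F σ)) (Set.Icc (0:ℝ) 1) σ := by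
    intro σ hσ
    have hFd : HasDerivWithinAt F (u σ) (Set.Icc (0:ℝ) 1) σ := by
      rcases eq_or_lt_of_le hσ.2 with h1 | h1
      · subst h1
        have hmeas : StronglyMeasurableAtFilter u (nhdsWithin 1 (Set.Iic 1)) volume := by
          refine ⟨Set.Icc 0 1, ?_, hcont.aestronglyMeasurable measurableSet_Icc⟩
          rw [← nhdsWithin_Icc_eq_nhdsLE (zero_lt_one)]
          exact self_mem_nhdsWithin
        have hcw : ContinuousWithinAt u (Set.Iic 1) 1 := by
          have := hcont.continuousWithinAt (Set.mem_Icc.mpr ⟨zero_le_one, le_rfl⟩)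
          rwa [ContinuousWithinAt, nhdsWithin_Icc_eq_nhdsLE (zero_lt_one)] at this
        have := intervalIntegral.integral_hasDerivWithinAt_right
          (hint 1 ⟨zero_le_one, le_rfl⟩) hmeas hcw (s := Set.Iic 1)
        exact this.mono Set.Icc_subset_Iic_self
      · have hnb : Set.Icc (0:ℝ) 1 ∈ nhds σ := Icc_mem_nhds hσ.1 h1
        have hca : ContinuousAt u σ :=
          (hcont.continuousWithinAt ⟨hσ.1.le, hσ.2⟩).continuousAt hnb
        have hmeas : StronglyMeasurableAtFilter u (nhds σ) volume :=
          ⟨Set.Icc 0 1, hnb, hcont.aestronglyMeasurable measurableSet_Icc⟩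
        exact (intervalIntegral.integral_hasDerivAt_right
          (hint σ ⟨hσ.1.le, hσ.2⟩) hmeas hca).hasDerivWithinAt
    have hFσ : 0 < F σ := hFpos σ hσ
    have hne : (2 * F σ) ≠ 0 := by positivity
    have hsqne : Real.sqrt (2 * F σ) ≠ 0 :=
      ne_of_gt (Real.sqrt_pos.mpr (by positivity))
    have hsq := (Real.hasDerivAt_sqrt hne).comp_hasDerivWithinAt σ (hFd.const_mul 2)
    have heq : (1 / (2 * Real.sqrt (2 * F σ))) * (2 * u σ)
        = u σ / Real.sqrt (2 * F σ) := by
      field_simp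
    have h2 : HasDerivWithinAt (fun x => Real.sqrt (2 * F x))
        (u σ / Real.sqrt (2 * F σ)) (Set.Icc (0:ℝ) 1) σ := by
      rw [← heq]; exact hsq
    exact h2.congr (fun x _ => hlam x) (hlam σ)
  have hudo : UniqueDiffOn ℝ (Set.Icc (0:ℝ) 1) := uniqueDiffOn_Icc zero_lt_one
  have hdW : ∀ σ ∈ Set.Ioc (0:ℝ) 1,
      derivWithin lam (Set.Icc (0:ℝ) 1) σ = u σ / Real.sqrt (2 * F σ) := by
    intro σ hσ
    exact (hlamderiv σ hσ).derivWithin (hudo σ ⟨hσ.1.le, hσ.2⟩)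
  -- key pointwise facts
  have key : ∀ σ ∈ Set.Ioc (0:ℝ) 1,
      lam σ * derivWithin lam (Set.Icc (0:ℝ) 1) σ = u σ := by
    intro σ hσ
    have hFσ : 0 < F σ := hFpos σ hσ
    have hsqne : Real.sqrt (2 * F σ) ≠ 0 :=
      ne_of_gt (Real.sqrt_pos.mpr (by positivity))
    rw [hdW σ hσ, hlam σ]
    field_simp
    exact mul_comm _ _
  refine ⟨?_, ?_, ?_, ?_⟩
  · rw [hlam 0]
    simp [hFdef]
  · intro σ hσ
    refine ⟨(hlamderiv σ hσ).differentiableWithinAt, key σ hσ, ?_⟩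
    rw [hdW σ hσ]
    have := (hpos σ hσ).le
    positivity
  · rw [intervalIntegral.integral_of_le zero_le_one,
        intervalIntegral.integral_of_le zero_le_one]
    congr 1
    apply setIntegral_congr_fun measurableSet_Ioc
    intro σ hσ
    simp only []
    rw [key σ hσ]
  · have hptwise : ∀ σ ∈ Set.Ioc (0:ℝ) 1,
        (u σ * Real.log (u σ)) / Real.sqrt (F σ) =
        Real.sqrt 2 * (derivWithin lam (Set.Icc (0:ℝ) 1) σ *
          Real.log (lam σ * derivWithin lam (Set.Icc (0:ℝ) 1) σ)) := by
      intro σ hσ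
      have hFσ : 0 < F σ := hFpos σ hσ
      have hlampos : 0 < lam σ := by
        rw [hlam σ]; exact Real.sqrt_pos.mpr (by positivity)
      have hsf : Real.sqrt (F σ) = lam σ / Real.sqrt 2 := by
        rw [hlam σ, Real.sqrt_mul (by norm_num : (0:ℝ) ≤ 2)]
        field_simp
        rfl
      rw [key σ hσ, hsf]
      have h2 : Real.sqrt 2 ≠ 0 := by positivity
      field_simp
      rw [← key σ hσ]
      ring
    rw [intervalIntegral.integral_of_le zero_le_one,
        intervalIntegral.integral_of_le zero_le_one]
    rw [setIntegral_congr_fun measurableSet_Ioc hptwise]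
    rw [integral_const_mul]
    ring
end

section
/- Fix b ∈ (√(2/e), √2) and set k = K(b) = -(e-1)b(b²e - 2)/(2 + (e-2)b²e), a = (b²e - 2)/((e-1)b), c = (2 - b²)/(2 + (e-2)b²e), and γ = a²/2. Then the piecewise function λ(σ) = √(2σ) for 0 ≤ σ < γ and λ(σ) = -k + √(2c(σ - γ) + (a+k)²) for γ ≤ σ ≤ 1 is continuous, satisfies λ(0) = 0, λ'(σ) ≥ 0 and λ(σ)λ'(σ) ≤ 1 on [0,1] (so λ is admissible), and its functional values are I[λ] = q(b) = (1/2)[b² - k² + k(b - a) - k² log(b/a)] and J[λ] = J_min(b) = √2 (k log(b/a) + b + k). -/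
open MeasureTheory Real

/-- The functional `I[λ] = -∫₀¹ λλ' log(λλ') dσ`. -/
noncomputable def lamLift (lam : ℝ → ℝ) : ℝ :=
  -∫ σ in (0:ℝ)..1, lam σ * deriv lam σ * Real.log (lam σ * deriv lam σ)

/-- The functional `J[λ] = -√2 ∫₀¹ λ' log(λλ') dσ`. -/
noncomputable def lamDrag (lam : ℝ → ℝ) : ℝ :=
  -Real.sqrt 2 * ∫ σ in (0:ℝ)..1, deriv lam σ * Real.log (lam σ * deriv lam σ)

set_option maxHeartbeats 1000000 in
/-- Theorem 1, part 1 (attainment): for `b ∈ (√(2/e), √2)` the piecewise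
function `λ(σ) = √(2σ)` for `σ < γ` and `λ(σ) = -k + √(2c(σ-γ) + (a+k)²)`
for `σ ≥ γ` is continuous, admissible, and satisfies `I[λ] = q(b)` and
`J[λ] = J_min(b)`. -/
theorem piecewise_minimizer_admissible_and_values
    (b : ℝ) (hb : b ∈ Set.Ioo (Real.sqrt (2 / Real.exp 1)) (Real.sqrt 2))
    (k a c γ : ℝ)
    (hk : k = -((Real.exp 1 - 1) * b * (b ^ 2 * Real.exp 1 - 2)) /
      (2 + (Real.exp 1 - 2) * b ^ 2 * Real.exp 1))
    (ha : a = (b ^ 2 * Real.exp 1 - 2) / ((Real.exp 1 - 1) * b))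
    (hc : c = (2 - b ^ 2) / (2 + (Real.exp 1 - 2) * b ^ 2 * Real.exp 1))
    (hγ : γ = a ^ 2 / 2)
    (lam : ℝ → ℝ)
    (hlam : ∀ σ, lam σ = if σ < γ then Real.sqrt (2 * σ)
      else -k + Real.sqrt (2 * c * (σ - γ) + (a + k) ^ 2)) :
    ContinuousOn lam (Set.Icc (0:ℝ) 1) ∧
    lam 0 = 0 ∧
    (∀ σ ∈ Set.Icc (0:ℝ) 1, 0 ≤ deriv lam σ ∧ lam σ * deriv lam σ ≤ 1) ∧
    lamLift lam =
      (1 / 2) * (b ^ 2 - k ^ 2 + k * (b - a) - k ^ 2 * Real.log (b / a)) ∧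
    lamDrag lam = Real.sqrt 2 * (k * Real.log (b / a) + b + k) := by
  obtain ⟨hb1, hb2⟩ := hb
  set E : ℝ := Real.exp 1 with hE
  have hE2 : (2:ℝ) < E := by
    rw [hE]; have := Real.exp_one_gt_d9; linarith
  have hE0 : (0:ℝ) < E := by linarith
  have hb0 : 0 < b := lt_of_le_of_lt (Real.sqrt_nonneg _) hb1
  have hbsq : b ^ 2 < 2 := by
    have h := Real.sq_sqrt (by norm_num : (0:ℝ) ≤ 2)
    calc b ^ 2 < Real.sqrt 2 ^ 2 := by
          exact pow_lt_pow_left₀ hb2 hb0.le (by norm_num)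
      _ = 2 := h
  have hbE : 2 < b ^ 2 * E := by
    have h1 : 2 / E < b ^ 2 := by
      have := (Real.sqrt_lt' hb0).mp hb1
      rw [hE]; linarith [Real.exp_pos 1]
    calc (2:ℝ) = 2 / E * E := by field_simp
      _ < b ^ 2 * E := mul_lt_mul_of_pos_right h1 hE0
  have hD : 0 < 2 + (E - 2) * b ^ 2 * E := by nlinarith [sq_nonneg b]
  have hP0 : 0 < (E - 1) * b := mul_pos (by linarith) hb0
  have hPne : (E - 1) * b ≠ 0 := ne_of_gt hP0
  have hDne : 2 + (E - 2) * b ^ 2 * E ≠ 0 := ne_of_gt hD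
  have ha0 : 0 < a := by
    rw [ha]; exact div_pos (by linarith) hP0
  have hc0 : 0 < c := by rw [hc]; exact div_pos (by linarith) hD
  have hc1 : c < 1 := by
    rw [hc, div_lt_one hD]; nlinarith
  have hak : a + k = a * c := by
    rw [ha, hk, hc, div_add_div _ _ hPne hDne, div_mul_div_comm, div_eq_div_iff (mul_ne_zero hPne hDne) (mul_ne_zero hPne hDne)]; ring
  have hbk : b + k = b * E * c := by
    rw [hk, hc, mul_div_assoc', eq_div_iff hDne, add_mul, div_mul_cancel₀ _ hDne]; ring
  have hak0 : 0 < a + k := by rw [hak]; positivity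
  have hbk0 : 0 < b + k := by rw [hbk]; positivity
  have hab : a < b := by
    rw [ha, div_lt_iff₀ hP0]; nlinarith
  have hγ0 : 0 < γ := by rw [hγ]; positivity
  have hγ1 : γ < 1 := by
    rw [hγ]; nlinarith
  have haux : 2 - a ^ 2 = c * (b ^ 2 * E ^ 2 - a ^ 2) := by
    rw [ha, hc, div_mul_eq_mul_div, eq_div_iff hDne]
    field_simp [hb0.ne', (by linarith : E - 1 ≠ 0)]
    ring
  have hkey : 2 * c * (1 - γ) + (a + k) ^ 2 = (b + k) ^ 2 := by
    rw [hγ, hak, hbk]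
    linear_combination c * haux
  -- abbreviations
  set S : ℝ → ℝ := fun σ => Real.sqrt (2 * c * (σ - γ) + (a + k) ^ 2) with hS
  set f2 : ℝ → ℝ := fun σ => -k + S σ with hf2
  have hlam2 : ∀ σ, γ ≤ σ → lam σ = f2 σ := fun σ hσ => by
    rw [hlam σ, if_neg (not_lt.mpr hσ)]
  have hlam1 : ∀ σ, σ < γ → lam σ = Real.sqrt (2 * σ) := fun σ hσ => by
    rw [hlam σ, if_pos hσ]
  have hSpos : ∀ σ, γ ≤ σ → 0 < 2 * c * (σ - γ) + (a + k) ^ 2 := fun σ hσ => by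
    have h1 : 0 ≤ 2 * c * (σ - γ) :=
      mul_nonneg (by linarith) (sub_nonneg.mpr hσ)
    have h2 : 0 < (a + k) ^ 2 := pow_pos hak0 2
    linarith
  have hSγ : S γ = a + k := by
    simp only [hS]; rw [show 2 * c * (γ - γ) + (a + k) ^ 2 = (a + k) ^ 2 by ring,
      Real.sqrt_sq hak0.le]
  have hS1v : S 1 = b + k := by
    simp only [hS]; rw [hkey, Real.sqrt_sq hbk0.le]
  have hf2γ : f2 γ = a := by simp [hf2, hSγ]
  have hf21 : f2 1 = b := by simp [hf2, hS1v]
  have h2γ : Real.sqrt (2 * γ) = a := by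
    rw [hγ, show 2 * (a ^ 2 / 2) = a ^ 2 by ring, Real.sqrt_sq ha0.le]
  have hlamγ : lam γ = a := by rw [hlam2 γ le_rfl, hf2γ]
  have hlam0 : lam 0 = 0 := by
    rw [hlam1 0 hγ0]; simp
  -- lam is globally the ≤-piecewise function
  have hlam' : lam = fun σ => if σ ≤ γ then Real.sqrt (2 * σ) else f2 σ := by
    funext σ
    rcases lt_trichotomy σ γ with h | h | h
    · rw [hlam1 σ h, if_pos h.le]
    · subst h; rw [hlamγ, if_pos le_rfl, h2γ]
    · rw [hlam2 σ h.le, if_neg (not_le.mpr h)]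
  -- continuity
  have hScont : Continuous S :=
    Real.continuous_sqrt.comp (((continuous_const.mul (continuous_id.sub continuous_const) : Continuous fun σ:ℝ => (2*c)*(σ-γ))).add continuous_const)
  have hcont : Continuous lam := by
    rw [hlam']
    apply Continuous.if_le
    · exact Real.continuous_sqrt.comp ((continuous_const.mul continuous_id : Continuous fun σ:ℝ => 2*σ))
    · exact (continuous_const.add hScont)
    · exact continuous_id
    · exact continuous_const
    · intro x hx; rw [hx, h2γ, hf2γ]
  have hSd : ∀ σ, γ ≤ σ → HasDerivAt S (c / S σ) σ := by
    intro σ hσ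
    have harg : HasDerivAt (fun σ => 2 * c * (σ - γ) + (a + k) ^ 2) (2 * c) σ := by
      simpa using (((hasDerivAt_id σ).sub_const γ).const_mul (2 * c)).add_const ((a + k) ^ 2)
    have := harg.sqrt (ne_of_gt (hSpos σ hσ))
    convert this using 1
    rw [hS]
    field_simp
  have hf2d : ∀ σ, γ ≤ σ → HasDerivAt f2 (c / S σ) σ := fun σ hσ =>
    (hSd σ hσ).const_add (-k)
  -- derivative of lam on (0, γ)
  have hd1 : ∀ σ, 0 < σ → σ < γ → HasDerivAt lam (1 / Real.sqrt (2 * σ)) σ := by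
    intro σ h0 h1
    have hsq : HasDerivAt (fun σ : ℝ => Real.sqrt (2 * σ)) (1 / Real.sqrt (2 * σ)) σ := by
      have harg : HasDerivAt (fun σ : ℝ => 2 * σ) 2 σ := by
        simpa using (hasDerivAt_id σ).const_mul 2
      have := harg.sqrt (by positivity)
      convert this using 1
      rw [eq_div_iff (by positivity)]
      field_simp
    apply hsq.congr_of_eventuallyEq
    filter_upwards [Iio_mem_nhds h1] with x hx
    exact hlam1 x hx
  -- derivative of lam at σ > γ
  have hd2 : ∀ σ, γ < σ → HasDerivAt lam (c / S σ) σ := by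
    intro σ hσ
    apply (hf2d σ hσ.le).congr_of_eventuallyEq
    filter_upwards [Ioi_mem_nhds hσ] with x hx
    exact hlam2 x (le_of_lt hx)
  -- derivative of lam at γ (gluing)
  have hdγ : HasDerivAt lam (c / S γ) γ := by
    have hL : HasDerivWithinAt lam (c / S γ) (Set.Iic γ) γ := by
      have hsq : HasDerivAt (fun σ : ℝ => Real.sqrt (2 * σ)) (1 / Real.sqrt (2 * γ)) γ := by
        have harg : HasDerivAt (fun σ : ℝ => 2 * σ) 2 γ := by
          simpa using (hasDerivAt_id γ).const_mul 2
        have := harg.sqrt (by positivity)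
        convert this using 1
        rw [eq_div_iff (by positivity)]
        field_simp
      have heq : c / S γ = 1 / Real.sqrt (2 * γ) := by
        rw [hSγ, h2γ, hak, eq_div_iff (ne_of_gt ha0)]
        field_simp
      rw [heq]
      apply (hsq.hasDerivWithinAt).congr
      · intro x hx
        rcases lt_or_eq_of_le (Set.mem_Iic.mp hx) with h | h
        · exact hlam1 x h
        · rw [h, hlamγ, h2γ]
      · rw [hlamγ, h2γ]
    have hR : HasDerivWithinAt lam (c / S γ) (Set.Ici γ) γ := by
      apply ((hf2d γ le_rfl).hasDerivWithinAt).congr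
      · intro x hx; exact hlam2 x hx
      · exact hlam2 γ le_rfl
    have := hL.union hR
    rw [Set.Iic_union_Ici] at this
    exact this.hasDerivAt (by simp)
  have hd2' : ∀ σ, γ ≤ σ → HasDerivAt lam (c / S σ) σ := by
    intro σ hσ
    rcases eq_or_lt_of_le hσ with h | h
    · rw [← h]; exact hdγ
    · exact hd2 σ h
  -- deriv values
  have hderiv1 : ∀ σ, 0 < σ → σ < γ → deriv lam σ = 1 / Real.sqrt (2 * σ) :=
    fun σ h0 h1 => (hd1 σ h0 h1).deriv
  have hderiv2 : ∀ σ, γ ≤ σ → deriv lam σ = c / S σ :=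
    fun σ hσ => (hd2' σ hσ).deriv
  -- non-differentiability at 0
  have hnd0 : ¬ DifferentiableAt ℝ lam 0 := by
    intro h
    have hin : DifferentiableAt ℝ (fun t : ℝ => t ^ 2 / 2) 0 := by
      apply DifferentiableAt.div_const
      exact differentiableAt_pow 2
    have hcomp : DifferentiableAt ℝ (fun t : ℝ => lam (t ^ 2 / 2)) 0 := by
      have h' : DifferentiableAt ℝ lam ((0:ℝ) ^ 2 / 2) := by norm_num; exact h
      exact DifferentiableAt.comp 0 h' hin
    apply not_differentiableAt_abs_zero
    apply hcomp.congr_of_eventuallyEq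
    have hmem : Metric.ball (0:ℝ) a ∈ nhds (0:ℝ) := Metric.ball_mem_nhds 0 ha0
    filter_upwards [hmem] with t ht
    have ht' : |t| < a := by simpa [Real.dist_eq] using ht
    have h1 : t ^ 2 / 2 < γ := by
      rw [hγ]
      have : t ^ 2 < a ^ 2 := by
        rw [← sq_abs t]
        exact pow_lt_pow_left₀ ht' (abs_nonneg t) (by norm_num)
      linarith
    rw [hlam1 _ h1, show 2 * (t ^ 2 / 2) = t ^ 2 by ring, Real.sqrt_sq_eq_abs]
  have hderiv0 : deriv lam 0 = 0 := deriv_zero_of_not_differentiableAt hnd0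
  -- admissibility
  have hadm : ∀ σ ∈ Set.Icc (0:ℝ) 1, 0 ≤ deriv lam σ ∧ lam σ * deriv lam σ ≤ 1 := by
    intro σ ⟨hσ0, hσ1⟩
    rcases eq_or_lt_of_le hσ0 with h0 | h0
    · rw [← h0, hderiv0, hlam0]; norm_num
    rcases lt_or_ge σ γ with h1 | h1
    · rw [hderiv1 σ h0 h1, hlam1 σ h1]
      constructor
      · positivity
      · rw [mul_one_div, div_self (by positivity)]
    · rw [hderiv2 σ h1, hlam2 σ h1]
      have hSp : 0 < S σ := Real.sqrt_pos.mpr (hSpos σ h1)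
      have hSge : a + k ≤ S σ := by
        rw [← hSγ]
        apply Real.sqrt_le_sqrt
        have h2 : 0 ≤ 2 * c * (σ - γ) :=
          mul_nonneg (by linarith) (sub_nonneg.mpr h1)
        linarith
      constructor
      · positivity
      · have heq : f2 σ * (c / S σ) = c * (-k + S σ) / S σ := by
          rw [hf2]; ring
        rw [heq, div_le_one hSp]
        have hprod : 0 ≤ (1 - c) * (S σ - a * c) := by
          rw [← hak]; exact mul_nonneg (by linarith) (by linarith)
        have hck : c * (-k) = a * c - a * c ^ 2 := by linear_combination (-c) * hak
        linarith [hprod, hck]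
  -- general facts on [γ, ∞)
  have hk0 : k < 0 := by
    linarith [hak, mul_pos ha0 (by linarith : (0:ℝ) < 1 - c)]
  have hSgen : ∀ σ, γ ≤ σ → 0 < S σ ∧ a + k ≤ S σ ∧ 0 < f2 σ := by
    intro σ hσ
    have hsp : 0 < S σ := Real.sqrt_pos.mpr (hSpos σ hσ)
    have hsge : a + k ≤ S σ := by
      rw [← hSγ]
      apply Real.sqrt_le_sqrt
      have h2 : 0 ≤ 2 * c * (σ - γ) :=
        mul_nonneg (by linarith) (sub_nonneg.mpr hσ)
      linarith
    exact ⟨hsp, hsge, by rw [hf2]; simp only; linarith⟩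
  -- integrands and antiderivatives
  set φI : ℝ → ℝ := fun σ => lam σ * deriv lam σ * Real.log (lam σ * deriv lam σ) with hφI
  set φJ : ℝ → ℝ := fun σ => deriv lam σ * Real.log (lam σ * deriv lam σ) with hφJ
  set hI : ℝ → ℝ := fun σ => f2 σ * (c / S σ) * Real.log (f2 σ * (c / S σ)) with hhI
  set hJ : ℝ → ℝ := fun σ => (c / S σ) * Real.log (f2 σ * (c / S σ)) with hhJ
  have hws : ∀ σ, f2 σ + k = S σ := by intro σ; rw [hf2]; ring
  -- derivative of the antiderivative G for the lift functional
  have hGd : ∀ σ, γ ≤ σ → HasDerivAt (fun σ =>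
      f2 σ ^ 2 / 2 * Real.log (c * f2 σ) - (f2 σ ^ 2 - k ^ 2) / 2 * Real.log (S σ)
        - k * f2 σ / 2) (hI σ) σ := by
    intro σ hσ
    obtain ⟨hsp, hsge, hw0⟩ := hSgen σ hσ
    have hw := hf2d σ hσ
    have hsd := hSd σ hσ
    have hcw : (0:ℝ) < c * f2 σ := mul_pos hc0 hw0
    have t1 := HasDerivAt.mul ((hw.pow 2).div_const 2) ((hw.const_mul c).log hcw.ne')
    have t2 := HasDerivAt.mul (((hw.pow 2).sub_const (k ^ 2)).div_const 2) (hsd.log hsp.ne')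
    have t3 := (hw.const_mul k).div_const 2
    have hd := (t1.sub t2).sub t3
    refine hd.congr_deriv (Eq.symm ?_)
    rw [hhI]
    simp only [Pi.pow_apply]
    rw [← hws σ]
    rw [Real.log_mul hw0.ne' (ne_of_gt (div_pos hc0 (by rw [hws σ]; exact hsp))),
      Real.log_div hc0.ne' (by rw [hws σ]; exact hsp.ne'),
      Real.log_mul hc0.ne' hw0.ne']
    have hsne : f2 σ + k ≠ 0 := by rw [hws σ]; exact hsp.ne'
    field_simp
    ring
  -- derivative of the antiderivative F for the drag functional
  have hFd : ∀ σ, γ ≤ σ → HasDerivAt (fun σ =>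
      f2 σ * Real.log (c * f2 σ) - S σ * Real.log (S σ)) (hJ σ) σ := by
    intro σ hσ
    obtain ⟨hsp, hsge, hw0⟩ := hSgen σ hσ
    have hw := hf2d σ hσ
    have hsd := hSd σ hσ
    have hcw : (0:ℝ) < c * f2 σ := mul_pos hc0 hw0
    have t1 := HasDerivAt.mul hw ((hw.const_mul c).log hcw.ne')
    have t2 := HasDerivAt.mul hsd (hsd.log hsp.ne')
    have hd := t1.sub t2
    refine hd.congr_deriv (Eq.symm ?_)
    rw [hhJ]
    simp only
    rw [← hws σ]
    rw [Real.log_mul hw0.ne' (ne_of_gt (div_pos hc0 (by rw [hws σ]; exact hsp))),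
      Real.log_div hc0.ne' (by rw [hws σ]; exact hsp.ne'),
      Real.log_mul hc0.ne' hw0.ne']
    have hsne : f2 σ + k ≠ 0 := by rw [hws σ]; exact hsp.ne'
    field_simp
    ring
  -- the integrands vanish on [0, γ]
  have hzeroI : Set.EqOn φI 0 (Set.uIcc 0 γ) := by
    rw [Set.uIcc_of_le hγ0.le]
    intro σ ⟨hσ0, hσγ⟩
    rcases eq_or_lt_of_le hσ0 with h0 | h0
    · simp [hφI, ← h0, hlam0]
    rcases lt_or_eq_of_le hσγ with h1 | h1
    · have : lam σ * deriv lam σ = 1 := by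
        rw [hderiv1 σ h0 h1, hlam1 σ h1, mul_one_div, div_self (by positivity)]
      simp [hφI, this]
    · have : lam σ * deriv lam σ = 1 := by
        rw [h1, hderiv2 γ le_rfl, hlamγ, hSγ, hak]
        field_simp
      show lam σ * deriv lam σ * Real.log (lam σ * deriv lam σ) = 0
      rw [this, Real.log_one]
      norm_num
  have hzeroJ : Set.EqOn φJ 0 (Set.uIcc 0 γ) := by
    rw [Set.uIcc_of_le hγ0.le]
    intro σ ⟨hσ0, hσγ⟩
    rcases eq_or_lt_of_le hσ0 with h0 | h0
    · simp [hφJ, ← h0, hlam0, hderiv0]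
    rcases lt_or_eq_of_le hσγ with h1 | h1
    · have : lam σ * deriv lam σ = 1 := by
        rw [hderiv1 σ h0 h1, hlam1 σ h1, mul_one_div, div_self (by positivity)]
      simp [hφJ, this]
    · have : lam σ * deriv lam σ = 1 := by
        rw [h1, hderiv2 γ le_rfl, hlamγ, hSγ, hak]
        field_simp
      show deriv lam σ * Real.log (lam σ * deriv lam σ) = 0
      rw [this, Real.log_one]
      norm_num
  -- the integrands agree with hI, hJ on [γ, 1]
  have heqI : Set.EqOn φI hI (Set.uIcc γ 1) := by
    rw [Set.uIcc_of_le hγ1.le]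
    intro σ ⟨hσγ, hσ1⟩
    simp only [hφI, hhI]
    rw [hderiv2 σ hσγ, hlam2 σ hσγ]
  have heqJ : Set.EqOn φJ hJ (Set.uIcc γ 1) := by
    rw [Set.uIcc_of_le hγ1.le]
    intro σ ⟨hσγ, hσ1⟩
    simp only [hφJ, hhJ]
    rw [hderiv2 σ hσγ, hlam2 σ hσγ]
  -- continuity of hI, hJ on [γ, 1]
  have hcontI : ContinuousOn hI (Set.uIcc γ 1) := by
    rw [Set.uIcc_of_le hγ1.le]
    intro σ hσ
    obtain ⟨hsp, hsge, hw0⟩ := hSgen σ hσ.1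
    apply ContinuousAt.continuousWithinAt
    have hf2c : ContinuousAt f2 σ := (continuous_const.add hScont).continuousAt
    have hdivc : ContinuousAt (fun σ => c / S σ) σ :=
      continuousAt_const.div hScont.continuousAt hsp.ne'
    have hprodc : ContinuousAt (fun σ => f2 σ * (c / S σ)) σ := hf2c.mul hdivc
    have hlogc : ContinuousAt (fun σ => Real.log (f2 σ * (c / S σ))) σ :=
      (Real.continuousAt_log (by positivity)).comp hprodc
    exact (hf2c.mul hdivc).mul hlogc
  have hcontJ : ContinuousOn hJ (Set.uIcc γ 1) := by
    rw [Set.uIcc_of_le hγ1.le]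
    intro σ hσ
    obtain ⟨hsp, hsge, hw0⟩ := hSgen σ hσ.1
    apply ContinuousAt.continuousWithinAt
    have hf2c : ContinuousAt f2 σ := (continuous_const.add hScont).continuousAt
    have hdivc : ContinuousAt (fun σ => c / S σ) σ :=
      continuousAt_const.div hScont.continuousAt hsp.ne'
    have hprodc : ContinuousAt (fun σ => f2 σ * (c / S σ)) σ := hf2c.mul hdivc
    have hlogc : ContinuousAt (fun σ => Real.log (f2 σ * (c / S σ))) σ :=
      (Real.continuousAt_log (by positivity)).comp hprodc
    exact hdivc.mul hlogc
  -- interval integrability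
  have hintI2 : IntervalIntegrable hI MeasureTheory.volume γ 1 :=
    hcontI.intervalIntegrable
  have hintJ2 : IntervalIntegrable hJ MeasureTheory.volume γ 1 :=
    hcontJ.intervalIntegrable
  have haeI2 : φI =ᵐ[MeasureTheory.volume.restrict (Set.uIoc γ 1)] hI := by
    filter_upwards [MeasureTheory.ae_restrict_mem measurableSet_uIoc] with x hx
    exact heqI (Set.uIoc_subset_uIcc hx)
  have haeJ2 : φJ =ᵐ[MeasureTheory.volume.restrict (Set.uIoc γ 1)] hJ := by
    filter_upwards [MeasureTheory.ae_restrict_mem measurableSet_uIoc] with x hx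
    exact heqJ (Set.uIoc_subset_uIcc hx)
  have hintI2' : IntervalIntegrable φI MeasureTheory.volume γ 1 :=
    hintI2.congr_ae haeI2.symm
  have hintJ2' : IntervalIntegrable φJ MeasureTheory.volume γ 1 :=
    hintJ2.congr_ae haeJ2.symm
  have hintI1' : IntervalIntegrable φI MeasureTheory.volume 0 γ := by
    apply (intervalIntegrable_const (c := (0:ℝ))).congr_ae
    filter_upwards [MeasureTheory.ae_restrict_mem measurableSet_uIoc] with x hx
    exact (hzeroI (Set.uIoc_subset_uIcc hx)).symm
  have hintJ1' : IntervalIntegrable φJ MeasureTheory.volume 0 γ := by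
    apply (intervalIntegrable_const (c := (0:ℝ))).congr_ae
    filter_upwards [MeasureTheory.ae_restrict_mem measurableSet_uIoc] with x hx
    exact (hzeroJ (Set.uIoc_subset_uIcc hx)).symm
  -- the integrals over [0, γ] vanish
  have hI0γ : ∫ σ in (0:ℝ)..γ, φI σ = 0 := by
    rw [intervalIntegral.integral_congr hzeroI]
    simp
  have hJ0γ : ∫ σ in (0:ℝ)..γ, φJ σ = 0 := by
    rw [intervalIntegral.integral_congr hzeroJ]
    simp
  -- FTC on [γ, 1]
  have hIγ1 : ∫ σ in γ..1, φI σ =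
      (b ^ 2 / 2 * Real.log (c * b) - (b ^ 2 - k ^ 2) / 2 * Real.log (b + k) - k * b / 2)
      - (a ^ 2 / 2 * Real.log (c * a) - (a ^ 2 - k ^ 2) / 2 * Real.log (a + k) - k * a / 2) := by
    rw [intervalIntegral.integral_congr heqI]
    have := intervalIntegral.integral_eq_sub_of_hasDerivAt
      (f := fun σ => f2 σ ^ 2 / 2 * Real.log (c * f2 σ)
        - (f2 σ ^ 2 - k ^ 2) / 2 * Real.log (S σ) - k * f2 σ / 2)
      (f' := hI) (a := γ) (b := 1)
      (fun σ hσ => hGd σ (by rw [Set.uIcc_of_le hγ1.le] at hσ; exact hσ.1)) hintI2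
    rw [this]
    simp only [hf21, hf2γ, hS1v, hSγ]
  have hJγ1 : ∫ σ in γ..1, φJ σ =
      (b * Real.log (c * b) - (b + k) * Real.log (b + k))
      - (a * Real.log (c * a) - (a + k) * Real.log (a + k)) := by
    rw [intervalIntegral.integral_congr heqJ]
    have := intervalIntegral.integral_eq_sub_of_hasDerivAt
      (f := fun σ => f2 σ * Real.log (c * f2 σ) - S σ * Real.log (S σ))
      (f' := hJ) (a := γ) (b := 1)
      (fun σ hσ => hFd σ (by rw [Set.uIcc_of_le hγ1.le] at hσ; exact hσ.1)) hintJ2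
    rw [this]
    simp only [hf21, hf2γ, hS1v, hSγ]
  -- split the integrals
  have hsplitI : ∫ σ in (0:ℝ)..1, φI σ = (∫ σ in (0:ℝ)..γ, φI σ) + ∫ σ in γ..1, φI σ :=
    (intervalIntegral.integral_add_adjacent_intervals hintI1' hintI2').symm
  have hsplitJ : ∫ σ in (0:ℝ)..1, φJ σ = (∫ σ in (0:ℝ)..γ, φJ σ) + ∫ σ in γ..1, φJ σ :=
    (intervalIntegral.integral_add_adjacent_intervals hintJ1' hintJ2').symm
  -- log identities
  have hlog_ak : Real.log (a + k) = Real.log a + Real.log c := by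
    rw [hak, Real.log_mul ha0.ne' hc0.ne']
  have hlog_bk : Real.log (b + k) = Real.log b + 1 + Real.log c := by
    rw [hbk, Real.log_mul (by positivity : b * E ≠ 0) hc0.ne',
      Real.log_mul hb0.ne' hE0.ne', hE, Real.log_exp]
  have hlog_ca : Real.log (c * a) = Real.log c + Real.log a :=
    Real.log_mul hc0.ne' ha0.ne'
  have hlog_cb : Real.log (c * b) = Real.log c + Real.log b :=
    Real.log_mul hc0.ne' hb0.ne'
  have hlog_ba : Real.log (b / a) = Real.log b - Real.log a :=
    Real.log_div hb0.ne' ha0.ne'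
  -- conclusion
  refine ⟨hcont.continuousOn, hlam0, hadm, ?_, ?_⟩
  · have hdef : lamLift lam = -∫ σ in (0:ℝ)..1, φI σ := rfl
    rw [hdef, hsplitI, hI0γ, hIγ1, hlog_cb, hlog_ca, hlog_bk, hlog_ak, hlog_ba]
    ring
  · have hdef : lamDrag lam = -Real.sqrt 2 * ∫ σ in (0:ℝ)..1, φJ σ := rfl
    rw [hdef, hsplitJ, hJ0γ, hJγ1, hlog_cb, hlog_ca, hlog_bk, hlog_ak, hlog_ba]
    ring
end

section
/- (Theorem 1, part 2 — attainment for small q.) Fix b ∈ (0, 1/√e) and set k = K₁(b) = -b(b²e - 2)/(2(b²e - 1)) and c = b²/(2(b²e - 1)). Then the function λ(σ) = -k - √(2cσ + k²) is admissible on [0,1] (λ(0) = 0, λ'(σ) ≥ 0, λ(σ)λ'(σ) ≤ 1), and its functional values are I[λ] = q₁(b) = (1/2)[b² + k·b - k² log((b+k)/k)] and J[λ] = J_max(b) = √2 (k log((b+k)/k) + b). -/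
open MeasureTheory Real

noncomputable def tfaux (k c σ : ℝ) : ℝ := Real.sqrt (2 * c * σ + k ^ 2)
noncomputable def Lfaux (k c σ : ℝ) : ℝ := -k - tfaux k c σ

lemma tfaux_continuous (k c : ℝ) : Continuous (tfaux k c) := by
  unfold tfaux; fun_prop

lemma Lfaux_continuous (k c : ℝ) : Continuous (Lfaux k c) := by
  unfold Lfaux
  exact continuous_const.sub (tfaux_continuous k c)

noncomputable def Ffaux (k c σ : ℝ) : ℝ :=
  Lfaux k c σ * Lfaux k c σ / 2 * (Real.log (-c) + Real.log (Lfaux k c σ))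
    - Lfaux k c σ * Lfaux k c σ / 4
    - (tfaux k c σ * tfaux k c σ / 2 + k * tfaux k c σ) * Real.log (tfaux k c σ)
    + tfaux k c σ * tfaux k c σ / 4 + k * tfaux k c σ

noncomputable def Gfaux (k c σ : ℝ) : ℝ :=
  Lfaux k c σ * (Real.log (-c) + Real.log (Lfaux k c σ)) - Lfaux k c σ
    + tfaux k c σ * Real.log (tfaux k c σ) - tfaux k c σ

lemma Ffaux_continuous (k c : ℝ) : Continuous (Ffaux k c) := by
  have ht := tfaux_continuous k c
  have hL := Lfaux_continuous k c
  have h1 : Continuous fun σ => Lfaux k c σ * Real.log (Lfaux k c σ) :=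
    Real.continuous_mul_log.comp hL
  have h2 : Continuous fun σ => tfaux k c σ * Real.log (tfaux k c σ) :=
    Real.continuous_mul_log.comp ht
  have heq : Ffaux k c = fun σ =>
      Lfaux k c σ * Lfaux k c σ / 2 * Real.log (-c)
      + (Lfaux k c σ / 2) * (Lfaux k c σ * Real.log (Lfaux k c σ))
      - Lfaux k c σ * Lfaux k c σ / 4
      - (tfaux k c σ / 2 + k) * (tfaux k c σ * Real.log (tfaux k c σ))
      + tfaux k c σ * tfaux k c σ / 4 + k * tfaux k c σ := by
    funext σ; unfold Ffaux; ring
  rw [heq]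
  exact ((((((hL.mul hL).div_const 2).mul continuous_const).add
    ((hL.div_const 2).mul h1)).sub ((hL.mul hL).div_const 4)).sub
    (((ht.div_const 2).add continuous_const).mul h2)).add
    ((ht.mul ht).div_const 4) |>.add (continuous_const.mul ht)

lemma Gfaux_continuous (k c : ℝ) : Continuous (Gfaux k c) := by
  have ht := tfaux_continuous k c
  have hL := Lfaux_continuous k c
  have h1 : Continuous fun σ => Lfaux k c σ * Real.log (Lfaux k c σ) :=
    Real.continuous_mul_log.comp hL
  have h2 : Continuous fun σ => tfaux k c σ * Real.log (tfaux k c σ) :=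
    Real.continuous_mul_log.comp ht
  have heq : Gfaux k c = fun σ =>
      Lfaux k c σ * Real.log (-c) + Lfaux k c σ * Real.log (Lfaux k c σ)
      - Lfaux k c σ + tfaux k c σ * Real.log (tfaux k c σ) - tfaux k c σ := by
    funext σ; unfold Gfaux; ring
  rw [heq]
  exact ((((hL.mul continuous_const).add h1).sub hL).add h2).sub ht

lemma tfaux_hasDeriv (k c σ : ℝ) (hu : 0 < 2 * c * σ + k ^ 2) :
    HasDerivAt (tfaux k c) (c / tfaux k c σ) σ := by
  have hinner : HasDerivAt (fun x : ℝ => 2 * c * x + k ^ 2) (2 * c) σ := by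
    simpa using ((hasDerivAt_id σ).const_mul (2 * c)).add_const (k ^ 2)
  have h := (Real.hasDerivAt_sqrt (ne_of_gt hu)).comp σ hinner
  have hs : Real.sqrt (2 * c * σ + k ^ 2) ≠ 0 := ne_of_gt (Real.sqrt_pos.mpr hu)
  have heq : 1 / (2 * Real.sqrt (2 * c * σ + k ^ 2)) * (2 * c) = c / tfaux k c σ := by
    unfold tfaux; field_simp
  rw [← heq]
  exact h

lemma Lfaux_hasDeriv (k c σ : ℝ) (hu : 0 < 2 * c * σ + k ^ 2) :
    HasDerivAt (Lfaux k c) (-(c / tfaux k c σ)) σ :=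
  (tfaux_hasDeriv k c σ hu).const_sub (-k)

lemma tfaux_pos (k c σ : ℝ) (hu : 0 < 2 * c * σ + k ^ 2) : 0 < tfaux k c σ :=
  Real.sqrt_pos.mpr hu

lemma Ffaux_hasDeriv (k c σ : ℝ) (hc : c < 0) (hu : 0 < 2 * c * σ + k ^ 2)
    (hL : 0 < Lfaux k c σ) :
    HasDerivAt (Ffaux k c)
      (Lfaux k c σ * (-c / tfaux k c σ) *
        Real.log (Lfaux k c σ * (-c / tfaux k c σ))) σ := by
  have ht0 : 0 < tfaux k c σ := tfaux_pos k c σ hu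
  have ht := tfaux_hasDeriv k c σ hu
  have hL' := Lfaux_hasDeriv k c σ hu
  have hlogL := hL'.log (ne_of_gt hL)
  have hlogt := ht.log (ne_of_gt ht0)
  have hdivpos : 0 < -c / tfaux k c σ := div_pos (by linarith) ht0
  have H := ((((((hL'.mul hL').div_const 2).mul
      ((hasDerivAt_const σ (Real.log (-c))).add hlogL)).sub
      ((hL'.mul hL').div_const 4)).sub
      ((((ht.mul ht).div_const 2).add (ht.const_mul k)).mul hlogt)).add
      ((ht.mul ht).div_const 4)).add (ht.const_mul k)
  rw [Real.log_mul (ne_of_gt hL) (ne_of_gt hdivpos),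
    Real.log_div (by linarith : -c ≠ 0) (ne_of_gt ht0)]
  unfold Ffaux
  have hLne : (-k - tfaux k c σ) ≠ 0 := ne_of_gt hL
  refine H.congr_deriv ?_
  simp only [Lfaux, Pi.add_apply, Pi.mul_apply]
  field_simp [hLne]
  ring

lemma Gfaux_hasDeriv (k c σ : ℝ) (hc : c < 0) (hu : 0 < 2 * c * σ + k ^ 2)
    (hL : 0 < Lfaux k c σ) :
    HasDerivAt (Gfaux k c)
      ((-c / tfaux k c σ) * Real.log (Lfaux k c σ * (-c / tfaux k c σ))) σ := by
  have ht0 : 0 < tfaux k c σ := tfaux_pos k c σ hu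
  have ht := tfaux_hasDeriv k c σ hu
  have hL' := Lfaux_hasDeriv k c σ hu
  have hlogL := hL'.log (ne_of_gt hL)
  have hlogt := ht.log (ne_of_gt ht0)
  have hdivpos : 0 < -c / tfaux k c σ := div_pos (by linarith) ht0
  have H := (((hL'.mul ((hasDerivAt_const σ (Real.log (-c))).add hlogL)).sub hL').add
      (ht.mul hlogt)).sub ht
  rw [Real.log_mul (ne_of_gt hL) (ne_of_gt hdivpos),
    Real.log_div (by linarith : -c ≠ 0) (ne_of_gt ht0)]
  unfold Gfaux
  have hLne : (-k - tfaux k c σ) ≠ 0 := ne_of_gt hL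
  refine H.congr_deriv ?_
  simp only [Lfaux, Pi.add_apply, Pi.mul_apply]
  field_simp [hLne]
  ring

set_option maxHeartbeats 1000000 in
/-- Theorem 1, part 2 (attainment for small `q`): for `b ∈ (0, 1/√e)`,
with `k = K₁(b)` and `c` as in the paper, the function
`λ(σ) = -k - √(2cσ + k²)` is admissible and satisfies `I[λ] = q₁(b)`,
`J[λ] = J_max(b)`. -/
theorem maximizer_small_q
    (b : ℝ) (hb : b ∈ Set.Ioo (0:ℝ) (1 / Real.sqrt (Real.exp 1)))
    (k c : ℝ)
    (hk : k = -(b * (b ^ 2 * Real.exp 1 - 2)) / (2 * (b ^ 2 * Real.exp 1 - 1)))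
    (hc : c = b ^ 2 / (2 * (b ^ 2 * Real.exp 1 - 1)))
    (lam : ℝ → ℝ)
    (hlam : ∀ σ, lam σ = -k - Real.sqrt (2 * c * σ + k ^ 2)) :
    lam 0 = 0 ∧
    (∀ σ ∈ Set.Icc (0:ℝ) 1, 0 ≤ deriv lam σ ∧ lam σ * deriv lam σ ≤ 1) ∧
    lamLift lam = (1 / 2) * (b ^ 2 + k * b - k ^ 2 * Real.log ((b + k) / k)) ∧
    lamDrag lam = Real.sqrt 2 * (k * Real.log ((b + k) / k) + b) := by
  obtain ⟨hb0, hb1⟩ := hb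
  have he1pos : (0:ℝ) < Real.exp 1 := Real.exp_pos 1
  have he1ge : (1:ℝ) ≤ Real.exp 1 := Real.one_le_exp (by norm_num)
  have hsq : (0:ℝ) < Real.sqrt (Real.exp 1) := Real.sqrt_pos.mpr he1pos
  have hb1' : b * Real.sqrt (Real.exp 1) < 1 := by
    rw [lt_div_iff₀ hsq] at hb1; exact hb1
  have hsqq : Real.sqrt (Real.exp 1) ^ 2 = Real.exp 1 := Real.sq_sqrt he1pos.le
  have hbe : b ^ 2 * Real.exp 1 < 1 := by nlinarith [mul_pos hb0 hsq]
  have hD : b ^ 2 * Real.exp 1 - 1 < 0 := by linarith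
  have hDne : (2 * (b ^ 2 * Real.exp 1 - 1)) ≠ 0 := by
    intro h; nlinarith
  have hkneg : k < 0 := by
    rw [hk]
    apply div_neg_of_pos_of_neg
    · nlinarith
    · linarith
  have hcneg : c < 0 := by
    rw [hc]
    exact div_neg_of_pos_of_neg (by positivity) (by linarith)
  have hbk : b + k < 0 := by
    have hbk' : b + k = b ^ 3 * Real.exp 1 / (2 * (b ^ 2 * Real.exp 1 - 1)) := by
      rw [hk]; field_simp [hD.ne]; ring
    rw [hbk']
    exact div_neg_of_pos_of_neg (by positivity) (by linarith)
  have hsum : 2 * c + k ^ 2 = (b + k) ^ 2 := by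
    rw [hk, hc]; field_simp [hD.ne]; ring
  have hcbe : c * b * Real.exp 1 = b + k := by
    rw [hk, hc]; field_simp [hD.ne]; ring
  -- positivity of the radicand on (-∞, 1]
  have hupos : ∀ x : ℝ, x ≤ 1 → 0 < 2 * c * x + k ^ 2 := by
    intro x hx
    nlinarith [mul_nonneg (neg_nonneg.mpr hcneg.le) (sub_nonneg.mpr hx),
      mul_pos (neg_pos.mpr hbk) (neg_pos.mpr hbk)]
  have htf_pos : ∀ x : ℝ, x ≤ 1 → 0 < tfaux k c x := fun x hx =>
    tfaux_pos _ _ _ (hupos x hx)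
  have htf0 : tfaux k c 0 = -k := by
    unfold tfaux
    rw [show (2 * c * 0 + k ^ 2 : ℝ) = k ^ 2 by ring, Real.sqrt_sq_eq_abs,
      abs_of_neg hkneg]
  have htf1 : tfaux k c 1 = -(b + k) := by
    unfold tfaux
    rw [show (2 * c * 1 + k ^ 2 : ℝ) = (b + k) ^ 2 by linarith, Real.sqrt_sq_eq_abs,
      abs_of_neg hbk]
  have hLf0 : Lfaux k c 0 = 0 := by unfold Lfaux; rw [htf0]; ring
  have hLf1 : Lfaux k c 1 = b := by unfold Lfaux; rw [htf1]; ring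
  have hLpos : ∀ x : ℝ, 0 < x → x ≤ 1 → 0 < Lfaux k c x := by
    intro x hx0 hx1
    have h2 : 2 * c * x + k ^ 2 < k ^ 2 := by nlinarith
    have h1 : tfaux k c x < -k := by
      calc tfaux k c x = Real.sqrt (2 * c * x + k ^ 2) := rfl
        _ < Real.sqrt (k ^ 2) := Real.sqrt_lt_sqrt (hupos x hx1).le h2
        _ = -k := by rw [Real.sqrt_sq_eq_abs, abs_of_neg hkneg]
    unfold Lfaux; linarith
  have htge : ∀ x : ℝ, 0 ≤ x → x ≤ 1 → -(b + k) ≤ tfaux k c x := by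
    intro x hx0 hx1
    have h2 : (b + k) ^ 2 ≤ 2 * c * x + k ^ 2 := by nlinarith
    calc -(b + k) = Real.sqrt ((b + k) ^ 2) := by
          rw [Real.sqrt_sq_eq_abs, abs_of_neg hbk]
      _ ≤ _ := Real.sqrt_le_sqrt h2
  -- Brillouin bound
  have hbril : ∀ x : ℝ, 0 ≤ x → x ≤ 1 → Lfaux k c x * (-c / tfaux k c x) ≤ 1 := by
    intro x hx0 hx1
    have ht0 := htf_pos x hx1
    have h1 : Lfaux k c x * (-c / tfaux k c x) =
        -c * (-k - tfaux k c x) / tfaux k c x := by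
      unfold Lfaux; ring
    rw [h1, div_le_one ht0]
    have hβ := htge x hx0 hx1
    have h2 : c * tfaux k c x ≤ c * (-(b + k)) := by
      nlinarith [mul_nonneg (neg_nonneg.mpr hcneg.le) (sub_nonneg.mpr hβ)]
    have h3 : -(c * b) ≤ -(b + k) := by
      nlinarith [mul_nonneg (mul_nonneg (neg_nonneg.mpr hcneg.le) hb0.le)
        (sub_nonneg.mpr he1ge)]
    linarith [h2, h3, hβ]
  -- identify lam
  have hlamf : lam = Lfaux k c := funext fun σ => by rw [hlam σ]; rfl
  have hdL : ∀ x : ℝ, x ≤ 1 → deriv (Lfaux k c) x = -c / tfaux k c x := by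
    intro x hx
    rw [(Lfaux_hasDeriv k c x (hupos x hx)).deriv]; ring
  have hdpos : ∀ x : ℝ, x ≤ 1 → 0 < -c / tfaux k c x := fun x hx =>
    div_pos (neg_pos.mpr hcneg) (htf_pos x hx)
  refine ⟨by rw [hlamf]; exact hLf0, ?_, ?_, ?_⟩
  · intro σ hσ
    rw [hlamf, hdL σ hσ.2]
    exact ⟨(hdpos σ hσ.2).le, hbril σ hσ.1 hσ.2⟩
  · -- lamLift
    have hbkpos : (0:ℝ) < -(b + k) := neg_pos.mpr hbk
    have hkpos : (0:ℝ) < -k := neg_pos.mpr hkneg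
    have hlog_bk : Real.log ((b + k) / k) = Real.log (-(b + k)) - Real.log (-k) := by
      rw [show (b + k) / k = -(b + k) / -k by rw [neg_div_neg_eq],
        Real.log_div (ne_of_gt hbkpos) (ne_of_gt hkpos)]
    have hprod : -(b + k) = -c * b * Real.exp 1 := by rw [← hcbe]; ring
    have hlogc : Real.log (-c) = Real.log (-(b + k)) - Real.log b - 1 := by
      rw [hprod, Real.log_mul (mul_ne_zero (ne_of_gt (neg_pos.mpr hcneg))
        (ne_of_gt hb0)) (Real.exp_ne_zero 1),
        Real.log_mul (ne_of_gt (neg_pos.mpr hcneg)) (ne_of_gt hb0), Real.log_exp]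
      ring

    have hcong : Set.EqOn (fun σ => lam σ * deriv lam σ * Real.log (lam σ * deriv lam σ))
        (fun σ => Lfaux k c σ * (-c / tfaux k c σ) *
          Real.log (Lfaux k c σ * (-c / tfaux k c σ))) (Set.uIcc (0:ℝ) 1) := by
      intro x hx
      rw [Set.uIcc_of_le (by norm_num : (0:ℝ) ≤ 1)] at hx
      simp only [hlamf, hdL x hx.2]
    have hint : IntervalIntegrable (fun σ => Lfaux k c σ * (-c / tfaux k c σ) *
        Real.log (Lfaux k c σ * (-c / tfaux k c σ))) volume 0 1 := by
      have h := intervalIntegral.intervalIntegrable_deriv_of_nonneg (a := 0) (b := 1) (g := fun σ => -Ffaux k c σ)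
        (g' := fun σ => -(Lfaux k c σ * (-c / tfaux k c σ) *
          Real.log (Lfaux k c σ * (-c / tfaux k c σ))))
        ((Ffaux_continuous k c).neg.continuousOn)
        (fun x hx => by
          have hx' : x ∈ Set.Ioo (0:ℝ) 1 := by simpa using hx
          exact (Ffaux_hasDeriv k c x hcneg (hupos x hx'.2.le)
            (hLpos x hx'.1 hx'.2.le)).neg)
        (fun x hx => by
          have hx' : x ∈ Set.Ioo (0:ℝ) 1 := by simpa using hx
          have hP : 0 < Lfaux k c x * (-c / tfaux k c x) :=
            mul_pos (hLpos x hx'.1 hx'.2.le) (hdpos x hx'.2.le)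
          have hlog : Real.log (Lfaux k c x * (-c / tfaux k c x)) ≤ 0 :=
            Real.log_nonpos hP.le (hbril x hx'.1.le hx'.2.le)
          nlinarith)
      simpa only [Pi.neg_def, neg_neg] using h.neg
    have hFTC : (∫ σ in (0:ℝ)..1, Lfaux k c σ * (-c / tfaux k c σ) *
        Real.log (Lfaux k c σ * (-c / tfaux k c σ))) = Ffaux k c 1 - Ffaux k c 0 := by
      apply intervalIntegral.integral_eq_sub_of_hasDeriv_right_of_le (by norm_num)
        ((Ffaux_continuous k c).continuousOn)
        (fun x hx => (Ffaux_hasDeriv k c x hcneg (hupos x hx.2.le)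
          (hLpos x hx.1 hx.2.le)).hasDerivWithinAt) hint
    unfold lamLift
    rw [intervalIntegral.integral_congr hcong, hFTC]
    have hF1 : Ffaux k c 1 = b * b / 2 * (Real.log (-c) + Real.log b)
        - b * b / 4
        - (-(b + k) * -(b + k) / 2 + k * -(b + k)) * Real.log (-(b + k))
        + -(b + k) * -(b + k) / 4 + k * -(b + k) := by
      unfold Ffaux; rw [hLf1, htf1]
    have hF0 : Ffaux k c 0 = k ^ 2 / 2 * Real.log (-k) - 3 / 4 * k ^ 2 := by
      unfold Ffaux; rw [hLf0, htf0]; ring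
    rw [hF1, hF0, hlog_bk, hlogc]
    ring
  · -- lamDrag
    have hbkpos : (0:ℝ) < -(b + k) := neg_pos.mpr hbk
    have hkpos : (0:ℝ) < -k := neg_pos.mpr hkneg
    have hlog_bk : Real.log ((b + k) / k) = Real.log (-(b + k)) - Real.log (-k) := by
      rw [show (b + k) / k = -(b + k) / -k by rw [neg_div_neg_eq],
        Real.log_div (ne_of_gt hbkpos) (ne_of_gt hkpos)]
    have hprod : -(b + k) = -c * b * Real.exp 1 := by rw [← hcbe]; ring
    have hlogc : Real.log (-c) = Real.log (-(b + k)) - Real.log b - 1 := by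
      rw [hprod, Real.log_mul (mul_ne_zero (ne_of_gt (neg_pos.mpr hcneg))
        (ne_of_gt hb0)) (Real.exp_ne_zero 1),
        Real.log_mul (ne_of_gt (neg_pos.mpr hcneg)) (ne_of_gt hb0), Real.log_exp]
      ring

    have hcong : Set.EqOn (fun σ => deriv lam σ * Real.log (lam σ * deriv lam σ))
        (fun σ => (-c / tfaux k c σ) *
          Real.log (Lfaux k c σ * (-c / tfaux k c σ))) (Set.uIcc (0:ℝ) 1) := by
      intro x hx
      rw [Set.uIcc_of_le (by norm_num : (0:ℝ) ≤ 1)] at hx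
      simp only [hlamf, hdL x hx.2]
    have hint : IntervalIntegrable (fun σ => (-c / tfaux k c σ) *
        Real.log (Lfaux k c σ * (-c / tfaux k c σ))) volume 0 1 := by
      have h := intervalIntegral.intervalIntegrable_deriv_of_nonneg (a := 0) (b := 1) (g := fun σ => -Gfaux k c σ)
        (g' := fun σ => -((-c / tfaux k c σ) *
          Real.log (Lfaux k c σ * (-c / tfaux k c σ))))
        ((Gfaux_continuous k c).neg.continuousOn)
        (fun x hx => by
          have hx' : x ∈ Set.Ioo (0:ℝ) 1 := by simpa using hx
          exact (Gfaux_hasDeriv k c x hcneg (hupos x hx'.2.le)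
            (hLpos x hx'.1 hx'.2.le)).neg)
        (fun x hx => by
          have hx' : x ∈ Set.Ioo (0:ℝ) 1 := by simpa using hx
          have hP : 0 < Lfaux k c x * (-c / tfaux k c x) :=
            mul_pos (hLpos x hx'.1 hx'.2.le) (hdpos x hx'.2.le)
          have hlog : Real.log (Lfaux k c x * (-c / tfaux k c x)) ≤ 0 :=
            Real.log_nonpos hP.le (hbril x hx'.1.le hx'.2.le)
          nlinarith [hdpos x hx'.2.le])
      simpa only [Pi.neg_def, neg_neg] using h.neg
    have hFTC : (∫ σ in (0:ℝ)..1, (-c / tfaux k c σ) *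
        Real.log (Lfaux k c σ * (-c / tfaux k c σ))) = Gfaux k c 1 - Gfaux k c 0 := by
      apply intervalIntegral.integral_eq_sub_of_hasDeriv_right_of_le (by norm_num)
        ((Gfaux_continuous k c).continuousOn)
        (fun x hx => (Gfaux_hasDeriv k c x hcneg (hupos x hx.2.le)
          (hLpos x hx.1 hx.2.le)).hasDerivWithinAt) hint
    unfold lamDrag
    rw [intervalIntegral.integral_congr hcong, hFTC]
    have hG1 : Gfaux k c 1 = b * (Real.log (-c) + Real.log b) - b
        + -(b + k) * Real.log (-(b + k)) - -(b + k) := by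
      unfold Gfaux; rw [hLf1, htf1]
    have hG0 : Gfaux k c 0 = -k * Real.log (-k) - -k := by
      unfold Gfaux; rw [hLf0, htf0]; ring
    rw [hG1, hG0, hlog_bk, hlogc]
    ring
end

section
/- (Theorem 1, part 2 — attainment at q = q*.) The linear function λ(σ) = σ/√e is admissible on [0,1] (λ(0) = 0, λ'(σ) = 1/√e ≥ 0, λ(σ)λ'(σ) = σ/e ≤ 1), and its functional values are I[λ] = 3/(4e) and J[λ] = 2√2/√e. -/
open MeasureTheory Real

open intervalIntegral

lemma log_intervalIntegrable' : IntervalIntegrable Real.log volume 0 1 := by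
  rw [intervalIntegrable_iff_integrableOn_Ioc_of_le zero_le_one]
  have hm : IntegrableOn (fun x : ℝ => 2 * x ^ (-(1/2) : ℝ)) (Set.Ioc 0 1) volume := by
    have := (intervalIntegrable_rpow' (a := (0:ℝ)) (b := 1) (r := -(1/2)) (by norm_num)).const_mul 2
    rwa [intervalIntegrable_iff_integrableOn_Ioc_of_le zero_le_one] at this
  refine hm.integrable.mono Real.measurable_log.aestronglyMeasurable ?_
  refine (ae_restrict_iff' measurableSet_Ioc).2 (ae_of_all _ fun x hx => ?_)
  obtain ⟨hx0, hx1⟩ := hx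
  have hrp : (0:ℝ) < x ^ (-(1/2):ℝ) := Real.rpow_pos_of_pos hx0 _
  simp only [Real.norm_eq_abs]
  rw [abs_of_nonneg (by linarith : (0:ℝ) ≤ 2 * x ^ (-(1/2):ℝ)),
    abs_of_nonpos (Real.log_nonpos hx0.le hx1)]
  have h1 : -Real.log x = 2 * Real.log (x ^ (-(1/2):ℝ)) := by
    rw [Real.log_rpow hx0]; ring
  rw [h1]
  have h2 : Real.log (x ^ (-(1/2):ℝ)) ≤ x ^ (-(1/2):ℝ) :=
    (Real.log_le_sub_one_of_pos hrp).trans (by linarith)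
  linarith

lemma integral_log01' : ∫ x in (0:ℝ)..1, Real.log x = -1 := by
  have hcont : ContinuousOn (fun x : ℝ => x * Real.log x - x) (Set.Icc 0 1) :=
    (Real.continuous_mul_log.sub continuous_id).continuousOn
  have hderiv : ∀ x ∈ Set.Ioo (0:ℝ) 1,
      HasDerivAt (fun x : ℝ => x * Real.log x - x) (Real.log x) x := by
    intro x hx
    have h := (Real.hasDerivAt_mul_log (ne_of_gt hx.1)).sub (hasDerivAt_id x)
    exact h.congr_deriv (by ring)
  have := intervalIntegral.integral_eq_sub_of_hasDerivAt_of_le zero_le_one hcont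
    (fun x hx => hderiv x hx) log_intervalIntegrable'
  simpa using this

lemma integral_mul_log01' : ∫ x in (0:ℝ)..1, x * Real.log x = -(1/4) := by
  have hcont : ContinuousOn (fun x : ℝ => x ^ 2 / 2 * Real.log x - x ^ 2 / 4) (Set.Icc 0 1) := by
    have h1 : Continuous fun x : ℝ => x / 2 * (x * Real.log x) :=
      (continuous_id.div_const 2).mul Real.continuous_mul_log
    have : (fun x : ℝ => x ^ 2 / 2 * Real.log x - x ^ 2 / 4)
        = fun x : ℝ => x / 2 * (x * Real.log x) - x ^ 2 / 4 := by
      funext x; ring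
    rw [this]
    exact (h1.sub (by continuity)).continuousOn
  have hderiv : ∀ x ∈ Set.Ioo (0:ℝ) 1,
      HasDerivAt (fun x : ℝ => x ^ 2 / 2 * Real.log x - x ^ 2 / 4) (x * Real.log x) x := by
    intro x hx
    have h1 : HasDerivAt (fun x : ℝ => x ^ 2 / 2) x x := by
      simpa using ((hasDerivAt_pow 2 x).div_const 2)
    have h2 : HasDerivAt Real.log x⁻¹ x := Real.hasDerivAt_log (ne_of_gt hx.1)
    have h3 := h1.mul h2
    have h4 : HasDerivAt (fun x : ℝ => x ^ 2 / 4) (x / 2) x := by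
      have := (hasDerivAt_pow 2 x).div_const 4
      simpa using this.congr_deriv (by ring)
    have h5 := h3.sub h4
    have : x * Real.log x + x ^ 2 / 2 * x⁻¹ - x / 2 = x * Real.log x := by
      have hxne : x ≠ 0 := ne_of_gt hx.1
      field_simp
      ring
    exact h5.congr_deriv this
  have hint : IntervalIntegrable (fun x : ℝ => x * Real.log x) volume 0 1 :=
    Real.continuous_mul_log.intervalIntegrable 0 1
  have := intervalIntegral.integral_eq_sub_of_hasDerivAt_of_le zero_le_one hcont
    (fun x hx => hderiv x hx) hint
  simpa using this

/-- Theorem 1, part 2 (attainment at `q = q*`): the function `λ(σ) = σ/√e`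
is admissible (`λ(0) = 0`, `λ' = 1/√e ≥ 0`, `λλ' = σ/e ≤ 1` on `[0,1]`) and
satisfies `I[λ] = 3/(4e)`, `J[λ] = 2√2/√e`. -/
theorem maximizer_q_star
    (lam : ℝ → ℝ) (hlam : ∀ σ, lam σ = σ / Real.sqrt (Real.exp 1)) :
    lam 0 = 0 ∧
    (∀ σ ∈ Set.Icc (0:ℝ) 1,
      deriv lam σ = 1 / Real.sqrt (Real.exp 1) ∧
      0 ≤ deriv lam σ ∧
      lam σ * deriv lam σ = σ / Real.exp 1 ∧
      lam σ * deriv lam σ ≤ 1) ∧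
    lamLift lam = 3 / (4 * Real.exp 1) ∧
    lamDrag lam = 2 * Real.sqrt 2 / Real.sqrt (Real.exp 1) := by
  set c := Real.sqrt (Real.exp 1) with hcdef
  have hc : 0 < c := Real.sqrt_pos.2 (Real.exp_pos 1)
  have hcc : c * c = Real.exp 1 := Real.mul_self_sqrt (Real.exp_pos 1).le
  have he : 0 < Real.exp 1 := Real.exp_pos 1
  have hfun : lam = fun σ => σ / c := funext hlam
  have hderiv : ∀ σ, deriv lam σ = 1 / c := by
    intro σ
    rw [hfun]
    simp [deriv_div_const, one_div]
  have hprod : ∀ σ, lam σ * deriv lam σ = σ / Real.exp 1 := by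
    intro σ
    rw [hlam, hderiv, ← hcc]
    field_simp
  refine ⟨by rw [hlam]; simp, fun σ hσ => ⟨hderiv σ, by rw [hderiv]; positivity,
    hprod σ, ?_⟩, ?_, ?_⟩
  · rw [hprod]
    rw [div_le_one he]
    exact hσ.2.trans (by linarith [Real.add_one_le_exp (1:ℝ)])
  · -- lamLift
    rw [lamLift]
    have hcongr : ∫ σ in (0:ℝ)..1, lam σ * deriv lam σ * Real.log (lam σ * deriv lam σ)
        = ∫ σ in (0:ℝ)..1, (σ * Real.log σ) * (Real.exp 1)⁻¹ - σ * (Real.exp 1)⁻¹ := by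
      refine intervalIntegral.integral_congr_ae (MeasureTheory.ae_of_all _ fun x hx => ?_)
      rw [Set.uIoc_of_le zero_le_one] at hx
      have hx0 : 0 < x := hx.1
      rw [hprod, Real.log_div (ne_of_gt hx0) (ne_of_gt he), Real.log_exp]
      rw [div_eq_mul_inv]
      ring
    rw [hcongr, intervalIntegral.integral_sub
      ((show Continuous fun σ : ℝ => σ * Real.log σ * (Real.exp 1)⁻¹ from Real.continuous_mul_log.mul continuous_const).intervalIntegrable 0 1)
      ((by continuity : Continuous fun σ : ℝ => σ * (Real.exp 1)⁻¹).intervalIntegrable 0 1),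
      intervalIntegral.integral_mul_const, intervalIntegral.integral_mul_const,
      integral_mul_log01', integral_id]
    field_simp
    ring
  · -- lamDrag
    rw [lamDrag]
    have hcongr : ∫ σ in (0:ℝ)..1, deriv lam σ * Real.log (lam σ * deriv lam σ)
        = ∫ σ in (0:ℝ)..1, (Real.log σ) * c⁻¹ - c⁻¹ := by
      refine intervalIntegral.integral_congr_ae (MeasureTheory.ae_of_all _ fun x hx => ?_)
      rw [Set.uIoc_of_le zero_le_one] at hx
      have hx0 : 0 < x := hx.1
      rw [hprod, hderiv, Real.log_div (ne_of_gt hx0) (ne_of_gt he), Real.log_exp]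
      ring
    rw [hcongr, intervalIntegral.integral_sub
      (log_intervalIntegrable'.mul_const _)
      (intervalIntegrable_const),
      intervalIntegral.integral_mul_const, integral_log01',
      intervalIntegral.integral_const]
    field_simp
    ring
    rw [mul_inv_cancel₀ hc.ne']
    norm_num
end

section
/- (Theorem 1, part 2 — attainment for large q.) Fix b ∈ (1/√e, √(2/e)) and set k = K₁(b) = -b(b²e - 2)/(2(b²e - 1)) and c = b²/(2(b²e - 1)). Then the function λ(σ) = -k + √(2cσ + k²) is admissible on [0,1] (λ(0) = 0, λ'(σ) ≥ 0, λ(σ)λ'(σ) ≤ 1), and its functional values are I[λ] = q₁(b) = (1/2)[b² + k·b - k² log((b+k)/k)] and J[λ] = J_max(b) = √2 (k log((b+k)/k) + b). -/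
open MeasureTheory Real

/-- FTC for a nonpositive integrand with antiderivative continuous on `[0,1]`. -/
lemma my_ftc_nonpos (f F : ℝ → ℝ) (hcont : ContinuousOn F (Set.Icc 0 1))
    (hder : ∀ x ∈ Set.Ioo (0:ℝ) 1, HasDerivAt F (f x) x)
    (hnp : ∀ x ∈ Set.Ioo (0:ℝ) 1, f x ≤ 0) :
    ∫ σ in (0:ℝ)..1, f σ = F 1 - F 0 := by
  apply intervalIntegral.integral_eq_sub_of_hasDerivAt_of_le zero_le_one hcont hder
  have h : IntervalIntegrable (fun x => -f x) volume 0 1 := by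
    apply intervalIntegral.intervalIntegrable_deriv_of_nonneg (g := fun x => -F x)
    · rw [Set.uIcc_of_le (zero_le_one' ℝ)]
      exact hcont.neg
    · intro x hx
      rw [min_eq_left (zero_le_one' ℝ), max_eq_right (zero_le_one' ℝ)] at hx
      exact (hder x hx).neg
    · intro x hx
      rw [min_eq_left (zero_le_one' ℝ), max_eq_right (zero_le_one' ℝ)] at hx
      simpa using hnp x hx
  have h2 := h.neg
  simpa only [Pi.neg_def, neg_neg] using h2

lemma hasDerivAt_H (k L : ℝ) {x : ℝ} (hk : 0 < k) (hx : k < x) :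
    HasDerivAt (fun y => (y - k)^2/2 * L + (y - k)/2 * ((y - k) * Real.log (y - k))
      - (y - k)^2/4 - y^2/2 * Real.log y + y^2/4 + k * (y * Real.log y - y))
      ((x - k) * (L + Real.log (x - k) - Real.log x)) x := by
  have hx0 : 0 < x := hk.trans hx
  have hxk : 0 < x - k := sub_pos.2 hx
  have h1 : HasDerivAt (fun y : ℝ => y - k) 1 x := (hasDerivAt_id x).sub_const k
  have h2 : HasDerivAt (fun y : ℝ => (y - k) * Real.log (y - k)) (Real.log (x - k) + 1) x := by
    have := (Real.hasDerivAt_mul_log hxk.ne').comp x h1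
    simpa [Function.comp_def] using this
  have h3 : HasDerivAt (fun y : ℝ => Real.log y) x⁻¹ x := Real.hasDerivAt_log hx0.ne'
  have h4 : HasDerivAt (fun y : ℝ => y * Real.log y) (Real.log x + 1) x :=
    Real.hasDerivAt_mul_log hx0.ne'
  have h5 : HasDerivAt (fun y : ℝ => (y - k)^2) (2 * (x - k)) x := by
    simpa using h1.fun_pow 2
  have h6 : HasDerivAt (fun y : ℝ => y^2) (2*x) x := by
    simpa using (hasDerivAt_id x).fun_pow 2
  have hbig := (((((((h5.div_const 2).mul_const L).add
      ((h1.div_const 2).mul h2)).sub (h5.div_const 4)).sub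
      ((h6.div_const 2).mul h3)).add (h6.div_const 4)).add
      ((h4.sub (hasDerivAt_id x)).const_mul k))
  refine hbig.congr_deriv ?_
  field_simp
  ring

lemma hasDerivAt_G (k L : ℝ) {x : ℝ} (hk : 0 < k) (hx : k < x) :
    HasDerivAt (fun y => y * L + ((y - k) * Real.log (y - k) - (y - k)) - (y * Real.log y - y))
      (L + Real.log (x - k) - Real.log x) x := by
  have hx0 : 0 < x := hk.trans hx
  have hxk : 0 < x - k := sub_pos.2 hx
  have h1 : HasDerivAt (fun y : ℝ => y - k) 1 x := (hasDerivAt_id x).sub_const k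
  have h2 : HasDerivAt (fun y : ℝ => (y - k) * Real.log (y - k)) (Real.log (x - k) + 1) x := by
    have := (Real.hasDerivAt_mul_log hxk.ne').comp x h1
    simpa [Function.comp_def] using this
  have h4 : HasDerivAt (fun y : ℝ => y * Real.log y) (Real.log x + 1) x :=
    Real.hasDerivAt_mul_log hx0.ne'
  have hbig := ((((hasDerivAt_id x).mul_const L).add (h2.sub h1)).sub
      (h4.sub (hasDerivAt_id x)))
  refine hbig.congr_deriv ?_
  ring

/-- Theorem 1, part 2 (attainment for large `q`): for `b ∈ (1/√e, √(2/e))`,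
with `k = K₁(b)` and `c` as in the paper, the function
`λ(σ) = -k + √(2cσ + k²)` is admissible and satisfies `I[λ] = q₁(b)`,
`J[λ] = J_max(b)`. -/
theorem maximizer_large_q
    (b : ℝ)
    (hb : b ∈ Set.Ioo (1 / Real.sqrt (Real.exp 1)) (Real.sqrt (2 / Real.exp 1)))
    (k c : ℝ)
    (hk : k = -(b * (b ^ 2 * Real.exp 1 - 2)) / (2 * (b ^ 2 * Real.exp 1 - 1)))
    (hc : c = b ^ 2 / (2 * (b ^ 2 * Real.exp 1 - 1)))
    (lam : ℝ → ℝ)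
    (hlam : ∀ σ, lam σ = -k + Real.sqrt (2 * c * σ + k ^ 2)) :
    lam 0 = 0 ∧
    (∀ σ ∈ Set.Icc (0:ℝ) 1, 0 ≤ deriv lam σ ∧ lam σ * deriv lam σ ≤ 1) ∧
    lamLift lam = (1 / 2) * (b ^ 2 + k * b - k ^ 2 * Real.log ((b + k) / k)) ∧
    lamDrag lam = Real.sqrt 2 * (k * Real.log ((b + k) / k) + b) := by
  obtain ⟨hbl, hbr⟩ := hb
  have he0 : (0:ℝ) < Real.exp 1 := Real.exp_pos 1
  have he1 : (1:ℝ) ≤ Real.exp 1 := by nlinarith [Real.add_one_le_exp 1]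
  have hsqpos : 0 < Real.sqrt (Real.exp 1) := Real.sqrt_pos.2 he0
  have hb0 : 0 < b := lt_trans (by positivity) hbl
  have hlow : 1 < b ^ 2 * Real.exp 1 := by
    have h1 : 1 < b * Real.sqrt (Real.exp 1) := by
      rw [div_lt_iff₀ hsqpos] at hbl; linarith
    nlinarith [Real.sq_sqrt he0.le]
  have hhigh : b ^ 2 * Real.exp 1 < 2 := by
    have h2 : b ^ 2 < 2 / Real.exp 1 := (Real.lt_sqrt hb0.le).1 hbr
    rw [lt_div_iff₀ he0] at h2; linarith
  have hD : 0 < b ^ 2 * Real.exp 1 - 1 := by linarith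
  have hk0 : 0 < k := by
    rw [hk]; apply div_pos (by nlinarith) (by linarith)
  have hc0 : 0 < c := by
    rw [hc]; apply div_pos (by positivity) (by linarith)
  have hbk0 : 0 < b + k := by linarith
  have id1 : 2 * c + k ^ 2 = (b + k) ^ 2 := by
    rw [hk, hc]; field_simp; ring
  have id2 : c * (b * Real.exp 1) = b + k := by
    rw [hk, hc]; field_simp; ring
  have hlogc : Real.log c = Real.log (b + k) - Real.log b - 1 := by
    have hc' : c = (b + k) / (b * Real.exp 1) := by
      rw [eq_div_iff (by positivity)]; exact id2
    rw [hc', Real.log_div hbk0.ne' (by positivity), Real.log_mul hb0.ne' he0.ne', Real.log_exp]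
    ring
  -- facts about s σ = √(2cσ + k²)
  have hu : ∀ σ : ℝ, 0 ≤ σ → 0 < 2*c*σ + k^2 := by intro σ hσ; nlinarith
  have hspos : ∀ σ : ℝ, 0 ≤ σ → 0 < Real.sqrt (2*c*σ + k^2) := fun σ hσ =>
    Real.sqrt_pos.2 (hu σ hσ)
  have hsk : ∀ σ : ℝ, 0 ≤ σ → k ≤ Real.sqrt (2*c*σ + k^2) := by
    intro σ hσ
    calc k = Real.sqrt (k^2) := (Real.sqrt_sq hk0.le).symm
    _ ≤ _ := Real.sqrt_le_sqrt (by nlinarith)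
  have hskl : ∀ σ : ℝ, 0 < σ → k < Real.sqrt (2*c*σ + k^2) := by
    intro σ hσ
    calc k = Real.sqrt (k^2) := (Real.sqrt_sq hk0.le).symm
    _ < _ := Real.sqrt_lt_sqrt (by positivity) (by nlinarith)
  have hsb : ∀ σ : ℝ, σ ≤ 1 → Real.sqrt (2*c*σ + k^2) ≤ b + k := by
    intro σ hσ
    calc Real.sqrt (2*c*σ + k^2) ≤ Real.sqrt ((b+k)^2) :=
          Real.sqrt_le_sqrt (by nlinarith)
    _ = b + k := Real.sqrt_sq hbk0.le
  have hs0 : Real.sqrt (2*c*0 + k^2) = k := by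
    have h : 2*c*(0:ℝ) + k^2 = k^2 := by ring
    rw [h, Real.sqrt_sq hk0.le]
  have hs1 : Real.sqrt (2*c*1 + k^2) = b + k := by
    have h : 2*c*(1:ℝ) + k^2 = (b+k)^2 := by rw [← id1]; ring
    rw [h, Real.sqrt_sq hbk0.le]
  -- derivative of lam
  have hsd : ∀ σ : ℝ, 0 ≤ σ →
      HasDerivAt (fun x => Real.sqrt (2*c*x + k^2)) (c / Real.sqrt (2*c*σ + k^2)) σ := by
    intro σ hσ
    have hin : HasDerivAt (fun x : ℝ => 2*c*x + k^2) (2*c) σ := by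
      simpa using ((hasDerivAt_id σ).const_mul (2*c)).add_const (k^2)
    have h := hin.sqrt (hu σ hσ).ne'
    convert h using 1
    have hne : Real.sqrt (2*c*σ + k^2) ≠ 0 := (hspos σ hσ).ne'
    field_simp
  have hld : ∀ σ : ℝ, 0 ≤ σ → HasDerivAt lam (c / Real.sqrt (2*c*σ + k^2)) σ := by
    intro σ hσ
    have hfun : lam = fun x => -k + Real.sqrt (2*c*x + k^2) := funext hlam
    rw [hfun]
    exact (hsd σ hσ).const_add (-k)
  have hderiv : ∀ σ : ℝ, 0 ≤ σ → deriv lam σ = c / Real.sqrt (2*c*σ + k^2) := fun σ hσ =>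
    (hld σ hσ).deriv
  -- Brillouin condition
  have hbri : ∀ σ ∈ Set.Icc (0:ℝ) 1, 0 ≤ deriv lam σ ∧ lam σ * deriv lam σ ≤ 1 := by
    intro σ hσ
    set t := Real.sqrt (2*c*σ + k^2) with ht
    have ht0 : 0 < t := hspos σ hσ.1
    have htk : k ≤ t := hsk σ hσ.1
    have htb : t ≤ b + k := hsb σ hσ.2
    rw [hderiv σ hσ.1, hlam σ]
    constructor
    · positivity
    · have heq : (-k + t) * (c/t) = ((-k + t)*c)/t := by ring
      rw [heq, div_le_one ht0]
      have h3 : c*b*t ≤ (b+k)*t := by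
        have e1 : (b+k)*t - c*b*t = c*b*t*(Real.exp 1 - 1) := by rw [← id2]; ring
        linarith [mul_nonneg (mul_nonneg (mul_nonneg hc0.le hb0.le) ht0.le)
          (sub_nonneg.2 he1), e1]
      have h5 : (b+k)*((-k + t)*c) ≤ (b+k)*t := by
        have e2 : c*b*t - (b+k)*((-k + t)*c) = c*k*(b+k-t) := by ring
        linarith [mul_nonneg (mul_nonneg hc0.le hk0.le) (sub_nonneg.2 htb), e2, h3]
      exact le_of_mul_le_mul_left h5 hbk0
  refine ⟨by rw [hlam 0, hs0]; ring, hbri, ?_, ?_⟩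
  -- common facts for integrands on (0,1)
  · -- lamLift
    set F : ℝ → ℝ := fun σ => (Real.sqrt (2*c*σ + k^2) - k)^2/2 * Real.log c
      + (Real.sqrt (2*c*σ + k^2) - k)/2 *
          ((Real.sqrt (2*c*σ + k^2) - k) * Real.log (Real.sqrt (2*c*σ + k^2) - k))
      - (Real.sqrt (2*c*σ + k^2) - k)^2/4
      - (Real.sqrt (2*c*σ + k^2))^2/2 * Real.log (Real.sqrt (2*c*σ + k^2))
      + (Real.sqrt (2*c*σ + k^2))^2/4
      + k * (Real.sqrt (2*c*σ + k^2) * Real.log (Real.sqrt (2*c*σ + k^2))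
          - Real.sqrt (2*c*σ + k^2)) with hF
    have hscont : Continuous (fun σ : ℝ => Real.sqrt (2*c*σ + k^2)) :=
      Real.continuous_sqrt.comp ((continuous_const.mul continuous_id).add continuous_const)
    have hFcont : ContinuousOn F (Set.Icc 0 1) := by
      rw [hF]
      apply ContinuousOn.add
      apply ContinuousOn.add
      apply ContinuousOn.sub
      apply ContinuousOn.sub
      apply ContinuousOn.add
      · exact (((hscont.sub continuous_const).pow 2).div_const 2).continuousOn.mul
          continuousOn_const
      · exact ((hscont.sub continuous_const).div_const 2).continuousOn.mul
          (Real.continuous_mul_log.comp (hscont.sub continuous_const)).continuousOn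
      · exact (((hscont.sub continuous_const).pow 2).div_const 4).continuousOn
      · exact (((hscont.pow 2).div_const 2).continuousOn).mul
          (hscont.continuousOn.log (fun x hx => (hspos x hx.1).ne'))
      · exact ((hscont.pow 2).div_const 4).continuousOn
      · exact continuousOn_const.mul
          ((hscont.continuousOn.mul
            (hscont.continuousOn.log (fun x hx => (hspos x hx.1).ne'))).sub
            hscont.continuousOn)
    have hFder : ∀ x ∈ Set.Ioo (0:ℝ) 1,
        HasDerivAt F (lam x * deriv lam x * Real.log (lam x * deriv lam x)) x := by
      intro σ hσ
      set t := Real.sqrt (2*c*σ + k^2) with ht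
      have ht0 : 0 < t := hspos σ hσ.1.le
      have htk : k < t := hskl σ hσ.1
      have htk' : 0 < t - k := sub_pos.2 htk
      have hcomp := (hasDerivAt_H k (Real.log c) hk0 htk).comp σ (hsd σ hσ.1.le)
      have hval : lam σ * deriv lam σ * Real.log (lam σ * deriv lam σ)
          = ((t - k) * (Real.log c + Real.log (t - k) - Real.log t)) * (c / t) := by
        rw [hlam σ, hderiv σ hσ.1.le, ← ht]
        have h1 : (-k + t) * (c / t) = c * ((t - k)/t) := by ring
        rw [h1, Real.log_mul hc0.ne' (div_pos htk' ht0).ne', Real.log_div htk'.ne' ht0.ne']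
        ring
      rw [hval]
      exact hcomp
    have hFnp : ∀ x ∈ Set.Ioo (0:ℝ) 1,
        lam x * deriv lam x * Real.log (lam x * deriv lam x) ≤ 0 := by
      intro σ hσ
      have h1 := hbri σ ⟨hσ.1.le, hσ.2.le⟩
      have hnn : 0 ≤ lam σ * deriv lam σ := by
        rw [hlam σ, hderiv σ hσ.1.le]
        have := hsk σ hσ.1.le
        have := hspos σ hσ.1.le
        apply mul_nonneg (by linarith) (by positivity)
      exact mul_nonpos_iff.2 (Or.inl ⟨hnn, Real.log_nonpos hnn h1.2⟩)
    have hint := my_ftc_nonpos _ F hFcont hFder hFnp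
    rw [lamLift, hint, hF]
    simp only [hs0, hs1]
    rw [Real.log_div hbk0.ne' hk0.ne', hlogc]
    have hbkk : b + k - k = b := by ring
    have hkk : k - k = 0 := by ring
    rw [hbkk, hkk, Real.log_zero]
    ring
  · -- lamDrag
    set G : ℝ → ℝ := fun σ => Real.sqrt (2*c*σ + k^2) * Real.log c
      + ((Real.sqrt (2*c*σ + k^2) - k) * Real.log (Real.sqrt (2*c*σ + k^2) - k)
          - (Real.sqrt (2*c*σ + k^2) - k))
      - (Real.sqrt (2*c*σ + k^2) * Real.log (Real.sqrt (2*c*σ + k^2))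
          - Real.sqrt (2*c*σ + k^2)) with hG
    have hscont : Continuous (fun σ : ℝ => Real.sqrt (2*c*σ + k^2)) :=
      Real.continuous_sqrt.comp ((continuous_const.mul continuous_id).add continuous_const)
    have hGcont : ContinuousOn G (Set.Icc 0 1) := by
      rw [hG]
      apply ContinuousOn.sub
      apply ContinuousOn.add
      · exact hscont.continuousOn.mul continuousOn_const
      · exact ((Real.continuous_mul_log.comp (hscont.sub continuous_const)).continuousOn).sub
          (hscont.sub continuous_const).continuousOn
      · exact (hscont.continuousOn.mul
          (hscont.continuousOn.log (fun x hx => (hspos x hx.1).ne'))).sub hscont.continuousOn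
    have hGder : ∀ x ∈ Set.Ioo (0:ℝ) 1,
        HasDerivAt G (deriv lam x * Real.log (lam x * deriv lam x)) x := by
      intro σ hσ
      set t := Real.sqrt (2*c*σ + k^2) with ht
      have ht0 : 0 < t := hspos σ hσ.1.le
      have htk : k < t := hskl σ hσ.1
      have htk' : 0 < t - k := sub_pos.2 htk
      have hcomp := (hasDerivAt_G k (Real.log c) hk0 htk).comp σ (hsd σ hσ.1.le)
      have hval : deriv lam σ * Real.log (lam σ * deriv lam σ)
          = (Real.log c + Real.log (t - k) - Real.log t) * (c / t) := by
        rw [hlam σ, hderiv σ hσ.1.le, ← ht]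
        have h1 : (-k + t) * (c / t) = c * ((t - k)/t) := by ring
        rw [h1, Real.log_mul hc0.ne' (div_pos htk' ht0).ne', Real.log_div htk'.ne' ht0.ne']
        ring
      rw [hval]
      exact hcomp
    have hGnp : ∀ x ∈ Set.Ioo (0:ℝ) 1,
        deriv lam x * Real.log (lam x * deriv lam x) ≤ 0 := by
      intro σ hσ
      have h1 := hbri σ ⟨hσ.1.le, hσ.2.le⟩
      have hnn : 0 ≤ lam σ * deriv lam σ := by
        rw [hlam σ, hderiv σ hσ.1.le]
        have := hsk σ hσ.1.le
        have := hspos σ hσ.1.le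
        apply mul_nonneg (by linarith) (by positivity)
      exact mul_nonpos_iff.2 (Or.inl ⟨h1.1, Real.log_nonpos hnn h1.2⟩)
    have hint := my_ftc_nonpos _ G hGcont hGder hGnp
    rw [lamDrag, hint, hG]
    simp only [hs0, hs1]
    rw [Real.log_div hbk0.ne' hk0.ne', hlogc]
    have hbkk : b + k - k = b := by ring
    have hkk : k - k = 0 := by ring
    rw [hbkk, hkk, Real.log_zero]
    ring
end

section
/- (Theorem 2, maximum lift.) For every ε ∈ [0,1) and all measurable functions u₁, u₂ : [0,1] → ℝ satisfying the Brillouin condition 0 ≤ uᵢ(σ) ≤ 1, the lift coefficient C_L = 2{(1-ε) I[u₂] - ε I[u₁]} satisfies C_L ≤ 2/e; moreover, C_L = 2/e if and only if ε = 0 (or ε I[u₁] = 0) and u₂(σ) = 1/e for almost every σ ∈ [0,1]. -/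
open MeasureTheory Real

/-- The lift functional `I[u] = -∫₀¹ u(σ) log u(σ) dσ`. -/
noncomputable def liftFunctional (u : ℝ → ℝ) : ℝ :=
  -∫ σ in (0:ℝ)..1, u σ * Real.log (u σ)


lemma aux_le {x : ℝ} (hx : 0 ≤ x) : -(x * Real.log x) ≤ (Real.exp 1)⁻¹ := by
  rcases eq_or_lt_of_le hx with h | h
  · rw [← h]; simp; positivity
  · have hy : 0 < (Real.exp 1 * x)⁻¹ := by positivity
    have h1 := Real.log_le_sub_one_of_pos hy
    rw [Real.log_inv, Real.log_mul (Real.exp_ne_zero 1) (ne_of_gt h), Real.log_exp] at h1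
    have h2 : -Real.log x ≤ (Real.exp 1 * x)⁻¹ := by linarith
    have h3 : x * (Real.exp 1 * x)⁻¹ = (Real.exp 1)⁻¹ := by
      field_simp
    nlinarith

lemma aux_lt {x : ℝ} (hx : 0 ≤ x) (hne : x ≠ (Real.exp 1)⁻¹) :
    -(x * Real.log x) < (Real.exp 1)⁻¹ := by
  rcases eq_or_lt_of_le hx with h | h
  · rw [← h]; simp; positivity
  · have hy : 0 < (Real.exp 1 * x)⁻¹ := by positivity
    have hne1 : (Real.exp 1 * x)⁻¹ ≠ 1 := by
      intro h1
      rw [inv_eq_one] at h1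
      apply hne
      field_simp; ring
      linarith
    have h1 := Real.log_lt_sub_one_of_pos hy hne1
    rw [Real.log_inv, Real.log_mul (Real.exp_ne_zero 1) (ne_of_gt h), Real.log_exp] at h1
    have h2 : -Real.log x < (Real.exp 1 * x)⁻¹ := by linarith
    have h3 : x * (Real.exp 1 * x)⁻¹ = (Real.exp 1)⁻¹ := by
      field_simp
    nlinarith

lemma aux_nonneg {x : ℝ} (hx : 0 ≤ x) (hx1 : x ≤ 1) : 0 ≤ -(x * Real.log x) := by
  have : Real.log x ≤ 0 := Real.log_nonpos hx hx1
  nlinarith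

lemma aux_intble {u : ℝ → ℝ} (hm : Measurable u)
    (hB : ∀ σ ∈ Set.Icc (0:ℝ) 1, 0 ≤ u σ ∧ u σ ≤ 1) :
    IntegrableOn (fun σ => u σ * Real.log (u σ)) (Set.Ioc 0 1) volume := by
  apply Integrable.mono' (integrable_const ((Real.exp 1)⁻¹))
  · exact (hm.mul (Real.measurable_log.comp hm)).aestronglyMeasurable
  · filter_upwards [ae_restrict_mem measurableSet_Ioc] with σ hσ
    have h := hB σ (Set.Ioc_subset_Icc_self hσ)
    have h1 : u σ * Real.log (u σ) ≤ 0 := by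
      have := aux_nonneg h.1 h.2; linarith
    rw [Real.norm_eq_abs, abs_of_nonpos h1]
    exact aux_le h.1

lemma lift_le {u : ℝ → ℝ} (hm : Measurable u)
    (hB : ∀ σ ∈ Set.Icc (0:ℝ) 1, 0 ≤ u σ ∧ u σ ≤ 1) :
    liftFunctional u ≤ (Real.exp 1)⁻¹ := by
  unfold liftFunctional
  rw [intervalIntegral.integral_of_le zero_le_one]
  have : -(Real.exp 1)⁻¹ ≤ ∫ σ in Set.Ioc (0:ℝ) 1, u σ * Real.log (u σ) := by
    have := setIntegral_mono_on (f := fun _ => -(Real.exp 1)⁻¹) (g := fun σ => u σ * Real.log (u σ)) ((integrableOn_const_iff).mpr (by simp [Real.volume_Ioc] : _))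
      (aux_intble hm hB) measurableSet_Ioc
      (fun σ hσ => by
        have h := hB σ (Set.Ioc_subset_Icc_self hσ)
        have := aux_le h.1; linarith)
    simpa [Real.volume_Ioc] using this
  linarith

lemma lift_nonneg {u : ℝ → ℝ}
    (hB : ∀ σ ∈ Set.Icc (0:ℝ) 1, 0 ≤ u σ ∧ u σ ≤ 1) :
    0 ≤ liftFunctional u := by
  unfold liftFunctional
  have : ∫ σ in (0:ℝ)..1, u σ * Real.log (u σ) ≤ 0 := by
    rw [← neg_nonneg, ← intervalIntegral.integral_neg]
    apply intervalIntegral.integral_nonneg zero_le_one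
    intro σ hσ
    exact aux_nonneg (hB σ hσ).1 (hB σ hσ).2
  linarith

/-- Theorem 2 (maximum lift): for `ε ∈ [0,1)` and Brillouin-admissible
velocity distributions `u₁, u₂`, the lift coefficient
`C_L = 2{(1-ε) I[u₂] - ε I[u₁]}` satisfies `C_L ≤ 2/e`, with equality iff
`ε = 0` and `u₂ = 1/e` almost everywhere on `[0,1]`. -/
theorem lift_coefficient_le_two_div_exp
    (ε : ℝ) (hε : ε ∈ Set.Ico (0:ℝ) 1)
    (u₁ u₂ : ℝ → ℝ) (hm₁ : Measurable u₁) (hm₂ : Measurable u₂)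
    (hB₁ : ∀ σ ∈ Set.Icc (0:ℝ) 1, 0 ≤ u₁ σ ∧ u₁ σ ≤ 1)
    (hB₂ : ∀ σ ∈ Set.Icc (0:ℝ) 1, 0 ≤ u₂ σ ∧ u₂ σ ≤ 1) :
    2 * ((1 - ε) * liftFunctional u₂ - ε * liftFunctional u₁) ≤ 2 / Real.exp 1 ∧
    (2 * ((1 - ε) * liftFunctional u₂ - ε * liftFunctional u₁) = 2 / Real.exp 1 ↔
      ε = 0 ∧
      ∀ᵐ σ ∂(volume.restrict (Set.Icc (0:ℝ) 1)), u₂ σ = 1 / Real.exp 1) := by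
  obtain ⟨hε0, hε1⟩ := hε
  have hepos := Real.exp_pos 1
  have hI₂le := lift_le hm₂ hB₂
  have hI₂nn := lift_nonneg hB₂
  have hI₁nn := lift_nonneg hB₁
  have hdiv : 2 / Real.exp 1 = 2 * (Real.exp 1)⁻¹ := by ring
  have key : (1 - ε) * liftFunctional u₂ - ε * liftFunctional u₁ ≤ (Real.exp 1)⁻¹ := by
    nlinarith [mul_nonneg hε0 hI₁nn, mul_le_mul_of_nonneg_left hI₂le (by linarith : (0:ℝ) ≤ 1 - ε),
      mul_nonneg hε0 (le_of_lt (inv_pos.mpr hepos))]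
  constructor
  · rw [hdiv]; linarith
  constructor
  · -- forward
    intro heq
    rw [hdiv] at heq
    have heq' : (1 - ε) * liftFunctional u₂ - ε * liftFunctional u₁ = (Real.exp 1)⁻¹ := by
      linarith
    have hεz : ε = 0 := by
      by_contra hne
      have hεpos : 0 < ε := lt_of_le_of_ne hε0 (Ne.symm hne)
      nlinarith [mul_nonneg hε0 hI₁nn, mul_le_mul_of_nonneg_left hI₂le (by linarith : (0:ℝ) ≤ 1 - ε),
        mul_pos hεpos (inv_pos.mpr hepos)]
    refine ⟨hεz, ?_⟩
    subst hεz
    have hI₂eq : liftFunctional u₂ = (Real.exp 1)⁻¹ := by linarith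
    -- set integral over Ioc of (e⁻¹ + u₂ log u₂) equals 0
    have hint := aux_intble hm₂ hB₂
    set g : ℝ → ℝ := fun σ => (Real.exp 1)⁻¹ + u₂ σ * Real.log (u₂ σ) with hg
    have hgint : IntegrableOn g (Set.Ioc 0 1) volume :=
      ((integrableOn_const_iff).mpr (by simp [Real.volume_Ioc])).add hint
    have hI : ∫ σ in Set.Ioc (0:ℝ) 1, u₂ σ * Real.log (u₂ σ) = -(Real.exp 1)⁻¹ := by
      have : liftFunctional u₂ = -∫ σ in Set.Ioc (0:ℝ) 1, u₂ σ * Real.log (u₂ σ) := by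
        unfold liftFunctional
        rw [intervalIntegral.integral_of_le zero_le_one]
      rw [this] at hI₂eq; linarith
    have hgzero : ∫ σ in Set.Ioc (0:ℝ) 1, g σ = 0 := by
      rw [hg]
      rw [integral_add ((integrableOn_const_iff).mpr (by simp [Real.volume_Ioc]) : IntegrableOn (fun _ => (Real.exp 1)⁻¹) (Set.Ioc (0:ℝ) 1) volume) hint]
      simp [hI, Real.volume_Ioc]
    have hgnn : 0 ≤ᵐ[volume.restrict (Set.Ioc (0:ℝ) 1)] g := by
      filter_upwards [ae_restrict_mem measurableSet_Ioc] with σ hσ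
      have h := hB₂ σ (Set.Ioc_subset_Icc_self hσ)
      have := aux_le h.1
      simp only [hg, Pi.zero_apply]; linarith
    have hae : g =ᵐ[volume.restrict (Set.Ioc (0:ℝ) 1)] 0 :=
      (integral_eq_zero_iff_of_nonneg_ae hgnn hgint).mp hgzero
    have haeIoc : ∀ᵐ σ ∂(volume.restrict (Set.Ioc (0:ℝ) 1)), u₂ σ = 1 / Real.exp 1 := by
      filter_upwards [hae, ae_restrict_mem measurableSet_Ioc] with σ hσ hmem
      have h := hB₂ σ (Set.Ioc_subset_Icc_self hmem)
      simp only [hg, Pi.zero_apply] at hσ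
      by_contra hne
      have hne' : u₂ σ ≠ (Real.exp 1)⁻¹ := by
        rw [one_div] at hne; exact hne
      have := aux_lt h.1 hne'
      linarith
    have hres : volume.restrict (Set.Icc (0:ℝ) 1) = volume.restrict (Set.Ioc (0:ℝ) 1) :=
      Measure.restrict_congr_set Ioc_ae_eq_Icc.symm
    rw [hres]
    exact haeIoc
  · -- backward
    rintro ⟨hεz, hae⟩
    subst hεz
    have haeIoc : ∀ᵐ σ ∂(volume.restrict (Set.Ioc (0:ℝ) 1)), u₂ σ = 1 / Real.exp 1 := by
      have hres : volume.restrict (Set.Icc (0:ℝ) 1) = volume.restrict (Set.Ioc (0:ℝ) 1) :=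
        Measure.restrict_congr_set Ioc_ae_eq_Icc.symm
      rw [hres] at hae; exact hae
    have hI₂ : liftFunctional u₂ = (Real.exp 1)⁻¹ := by
      unfold liftFunctional
      rw [intervalIntegral.integral_of_le zero_le_one]
      have hcongr : ∫ σ in Set.Ioc (0:ℝ) 1, u₂ σ * Real.log (u₂ σ)
          = ∫ _σ in Set.Ioc (0:ℝ) 1, ((Real.exp 1)⁻¹ * Real.log (Real.exp 1)⁻¹) := by
        apply integral_congr_ae
        filter_upwards [haeIoc] with σ hσ
        rw [hσ, one_div]
      rw [hcongr, setIntegral_const]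
      simp [Real.volume_Ioc, Real.log_inv, Real.log_exp]
    rw [hI₂, hdiv]
    ring
end

section
/- (Consistency of the piecewise minimizer.) Fix b ∈ (√(2/e), √2) and set k = K(b) = -(e-1)b(b²e - 2)/(2 + (e-2)b²e), a = (b²e - 2)/((e-1)b), c = (2 - b²)/(2 + (e-2)b²e), γ = a²/2, and λ(σ) = √(2σ) for 0 ≤ σ < γ, λ(σ) = -k + √(2c(σ - γ) + (a+k)²) for γ ≤ σ ≤ 1. Then: (i) λ is continuous at σ = γ, with λ(γ) = a; (ii) λ(1) = b, i.e. -k + √(2c(1 - γ) + (a+k)²) = b; and (iii) the transversality condition λ(1)·λ'(1) = 1/e holds, i.e. b·c/(b + k) = 1/e. -/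
open Real

/-- Consistency of the piecewise minimizer of Theorem 1, part 1: for
`b ∈ (√(2/e), √2)` and `k, a, c, γ` as in the paper, the piecewise function
`λ` is continuous at `γ` with `λ(γ) = a`, satisfies `λ(1) = b`, and the
transversality condition `λ(1) λ'(1) = 1/e`, i.e. `b·c/(b + k) = 1/e`, holds. -/
theorem piecewise_minimizer_consistency
    (b : ℝ) (hb : b ∈ Set.Ioo (Real.sqrt (2 / Real.exp 1)) (Real.sqrt 2))
    (k a c γ : ℝ)
    (hk : k = -((Real.exp 1 - 1) * b * (b ^ 2 * Real.exp 1 - 2)) /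
      (2 + (Real.exp 1 - 2) * b ^ 2 * Real.exp 1))
    (ha : a = (b ^ 2 * Real.exp 1 - 2) / ((Real.exp 1 - 1) * b))
    (hc : c = (2 - b ^ 2) / (2 + (Real.exp 1 - 2) * b ^ 2 * Real.exp 1))
    (hγ : γ = a ^ 2 / 2)
    (lam : ℝ → ℝ)
    (hlam : ∀ σ, lam σ = if σ < γ then Real.sqrt (2 * σ)
      else -k + Real.sqrt (2 * c * (σ - γ) + (a + k) ^ 2)) :
    ContinuousAt lam γ ∧
    lam γ = a ∧
    Real.sqrt (2 * γ) = a ∧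
    lam 1 = b ∧
    -k + Real.sqrt (2 * c * (1 - γ) + (a + k) ^ 2) = b ∧
    b * c / (b + k) = 1 / Real.exp 1 := by
  set E := Real.exp 1 with hE
  have hE2 : (2 : ℝ) < E := by
    have := Real.exp_one_gt_d9; linarith
  have hEpos : (0 : ℝ) < E := by linarith
  have hbpos : 0 < b := lt_of_le_of_lt (Real.sqrt_nonneg _) hb.1
  have hbsq_lt : b ^ 2 < 2 := by
    have h := hb.2
    nlinarith [Real.sq_sqrt (by norm_num : (0:ℝ) ≤ 2), Real.sqrt_nonneg (2:ℝ)]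
  have hbsqE : 2 < b ^ 2 * E := by
    have h := hb.1
    have h2 : 2 / E < b ^ 2 := (Real.sqrt_lt' hbpos).mp h
    calc (2:ℝ) = 2 / E * E := by field_simp
    _ < b ^ 2 * E := by
        exact mul_lt_mul_of_pos_right h2 hEpos
  have hD : 0 < 2 + (E - 2) * b ^ 2 * E := by nlinarith
  have hDne : (2 + (E - 2) * b ^ 2 * E) ≠ 0 := ne_of_gt hD
  have hE1 : (0 : ℝ) < E - 1 := by linarith
  have hDne' : 2 + b ^ 2 * E * (E - 2) ≠ 0 := by contrapose! hDne; linarith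
  have hbne : b ≠ 0 := ne_of_gt hbpos
  have hE1ne : E - 1 ≠ 0 := ne_of_gt hE1
  -- a > 0
  have hapos : 0 < a := by
    rw [ha]; exact div_pos (by nlinarith) (by positivity)
  -- a + k = (b²E-2)(2-b²)/((E-1)b D)
  have hak : a + k = (b ^ 2 * E - 2) * (2 - b ^ 2) / ((E - 1) * b * (2 + (E - 2) * b ^ 2 * E)) := by
    rw [ha, hk]; field_simp [hDne']; ring
  have hakpos : 0 < a + k := by
    rw [hak]
    apply div_pos (by nlinarith) (by positivity)
  -- b + k = b E (2-b²) / D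
  have hbk : b + k = b * E * (2 - b ^ 2) / (2 + (E - 2) * b ^ 2 * E) := by
    rw [hk]; field_simp [hDne']; ring
  have hbkpos : 0 < b + k := by
    rw [hbk]
    apply div_pos (by nlinarith) hD
  -- a < b, hence γ < 1
  have halt : a < b := by
    rw [ha, div_lt_iff₀ (by positivity)]
    nlinarith
  have hγlt : γ < 1 := by
    rw [hγ]; nlinarith
  -- √(2γ) = a
  have hsq : Real.sqrt (2 * γ) = a := by
    rw [hγ]
    have : 2 * (a ^ 2 / 2) = a ^ 2 := by ring
    rw [this, Real.sqrt_sq hapos.le]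
  -- lam γ = a
  have hlamγ : lam γ = a := by
    rw [hlam γ, if_neg (lt_irrefl γ)]
    have : 2 * c * (γ - γ) + (a + k) ^ 2 = (a + k) ^ 2 := by ring
    rw [this, Real.sqrt_sq hakpos.le]; ring
  -- key identity for λ(1) = b
  have hkey : 2 * c * (1 - γ) + (a + k) ^ 2 = (b + k) ^ 2 := by
    rw [hγ, ha, hc, hk]
    field_simp [hDne']
    ring
  have hlam1' : -k + Real.sqrt (2 * c * (1 - γ) + (a + k) ^ 2) = b := by
    rw [hkey, Real.sqrt_sq hbkpos.le]; ring
  have hlam1 : lam 1 = b := by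
    rw [hlam 1, if_neg (not_lt.mpr hγlt.le)]
    exact hlam1'
  -- transversality
  have htrans : b * c / (b + k) = 1 / E := by
    have h2b : (2 - b ^ 2) ≠ 0 := by nlinarith
    rw [hc, hbk]
    field_simp [hDne']
  -- continuity
  have hcont : ContinuousAt lam γ := by
    have heq : lam = fun σ => if γ ≤ σ
        then -k + Real.sqrt (2 * c * (σ - γ) + (a + k) ^ 2)
        else Real.sqrt (2 * σ) := by
      funext σ
      rw [hlam σ]
      rcases lt_or_ge σ γ with h | h
      · rw [if_pos h, if_neg (not_le.mpr h)]
      · rw [if_neg (not_lt.mpr h), if_pos h]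
    rw [heq]
    have hf : Continuous fun σ : ℝ => Real.sqrt (2 * σ) :=
      Real.continuous_sqrt.comp (continuous_const.mul continuous_id)
    have hg : Continuous fun σ : ℝ => -k + Real.sqrt (2 * c * (σ - γ) + (a + k) ^ 2) :=
      continuous_const.add (Real.continuous_sqrt.comp
        ((continuous_const.mul (continuous_id.sub continuous_const)).add continuous_const))
    apply Continuous.continuousAt
    apply Continuous.if_le hg hf continuous_const continuous_id
    intro x hx
    simp only [id] at hx
    rw [← hx, hsq]
    have : 2 * c * (γ - γ) + (a + k) ^ 2 = (a + k) ^ 2 := by ring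
    rw [this, Real.sqrt_sq hakpos.le]; ring
  exact ⟨hcont, hlamγ, hsq, hlam1, hlam1', htrans⟩
end
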